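/- arXiv:1909.03381 — 6 statements merged into one kernel-verified Lean document; each statement's English description precedes it below -/
import Mathlib

section
/- The minimum status of the dumbbell D_n(ceil((n+1)/2) - m, floor((n+1)/2) - m) equals m(n - m), for integers n >= 4 and 1 <= m <= floor(n/2). -/
open SimpleGraph

variable {V : Type*}

/-- The status of a vertex: sum of distances to all other vertices. -/
noncomputable def status [Fintype V] (G : SimpleGraph V) (u : V) : ℕ :=
  ∑ v : V, G.dist u v

/-- The minimum status of a graph. -/
noncomputable def minStatus [Fintype V] (G : SimpleGraph V) : ℕ :=
  sInf (Set.range (status G))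

/-- The matching number: maximum cardinality of a matching. -/
noncomputable def matchingNumber (G : SimpleGraph V) : ℕ :=
  sSup {k | ∃ M : G.Subgraph, M.IsMatching ∧ M.edgeSet.ncard = k}

/-- The domination number: minimum cardinality of a dominating set. -/
noncomputable def domNumber (G : SimpleGraph V) : ℕ :=
  sInf {k | ∃ S : Set V, (∀ v ∉ S, ∃ u ∈ S, G.Adj u v) ∧ S.ncard = k}

/-- The dumbbell `D_n(p,q)`: a path on `n - p - q` vertices `0, …, n-p-q-1`,
with `p` pendant vertices attached to vertex `0` and `q` pendant vertices
attached to vertex `n-p-q-1`. -/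
def dumbbell (n p q : ℕ) : SimpleGraph (Fin n) :=
  SimpleGraph.fromRel (fun a b =>
    ((a : ℕ) + 1 = (b : ℕ) ∧ (b : ℕ) < n - p - q) ∨
    ((a : ℕ) = 0 ∧ n - p - q ≤ (b : ℕ) ∧ (b : ℕ) < n - q) ∨
    ((a : ℕ) = n - p - q - 1 ∧ n - q ≤ (b : ℕ)))

/-- The tree `A_{n,m}`: a star with center `0` and leaves `1, …, n-m`, with one
pendant vertex `n-m+i` attached to leaf `i` for each `i = 1, …, m-1`. -/
def treeA (n m : ℕ) : SimpleGraph (Fin n) :=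
  SimpleGraph.fromRel (fun a b =>
    ((a : ℕ) = 0 ∧ 1 ≤ (b : ℕ) ∧ (b : ℕ) ≤ n - m) ∨
    (1 ≤ (a : ℕ) ∧ (a : ℕ) ≤ m - 1 ∧ (b : ℕ) = n - m + (a : ℕ)))

/-- The caterpillar `C_n(p,q)`: a path on vertices `0, …, n-p-q-1`; pendant
vertex `n-p-q+j` is attached to path vertex `j` for `j = 0, …, p-1`, and pendant
vertex `n-q+j` is attached to path vertex `n-p-2q+j` for `j = 0, …, q-1`. -/
def caterpillar (n p q : ℕ) : SimpleGraph (Fin n) :=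
  SimpleGraph.fromRel (fun a b =>
    ((a : ℕ) + 1 = (b : ℕ) ∧ (b : ℕ) < n - p - q) ∨
    (n - p - q ≤ (b : ℕ) ∧ (b : ℕ) < n - q ∧ (a : ℕ) = (b : ℕ) - (n - p - q)) ∨
    (n - q ≤ (b : ℕ) ∧ (a : ℕ) = (b : ℕ) - p - q))

namespace Stmt8Helpers

def T (x : ℤ) : ℤ := x * (x + 1) / 2

lemma two_T (x : ℤ) : 2 * T x = x * (x + 1) := by
  obtain ⟨k, hk⟩ := Int.even_mul_succ_self x
  unfold T; omega

lemma sum_id (N : ℕ) : ∑ k ∈ Finset.range N, ((N : ℤ) - k) = T N := by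
  induction N with
  | zero => norm_num [T]
  | succ n ih =>
    have h0 : ∀ k ∈ Finset.range n, ((n + 1 : ℕ) : ℤ) - k = ((n : ℤ) - k) + 1 := by
      intro k _; push_cast; ring
    rw [Finset.sum_range_succ, Finset.sum_congr rfl h0, Finset.sum_add_distrib,
      Finset.sum_const, Finset.card_range, ih]
    simp only [nsmul_eq_mul, mul_one]
    have h1 := two_T (n : ℤ)
    have h2 := two_T ((n : ℤ) + 1)
    push_cast
    nlinarith [h1, h2]

lemma sum_abs : ∀ (N : ℕ) (d : ℤ), -1 ≤ d → d ≤ N →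
    (∑ k ∈ Finset.range N, |d - (k : ℤ)|) = T d + T ((N : ℤ) - 1 - d) := by
  intro N
  induction N with
  | zero =>
    intro d h1 h2
    norm_num at h2
    have : d = -1 ∨ d = 0 := by omega
    rcases this with rfl | rfl <;> norm_num [T]
  | succ n ih =>
    intro d h1 h2
    rcases le_or_gt d (n : ℤ) with h | h
    · rw [Finset.sum_range_succ, ih d h1 h]
      have habs : |d - (n : ℤ)| = (n : ℤ) - d := by
        rw [abs_sub_comm]; exact abs_of_nonneg (by omega)
      rw [habs]
      have harg : ((n + 1 : ℕ) : ℤ) - 1 - d = (n : ℤ) - d := by push_cast; ring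
      rw [harg]
      have h1' := two_T ((n : ℤ) - d)
      have h2' := two_T ((n : ℤ) - 1 - d)
      nlinarith [h1', h2']
    · have hd : d = (n : ℤ) + 1 := by push_cast at h2; omega
      subst hd
      have h3 : ∀ k ∈ Finset.range (n + 1), |((n : ℤ) + 1) - k| = ((n + 1 : ℕ) : ℤ) - k := by
        intro k hk
        have := Finset.mem_range.mp hk
        rw [abs_of_nonneg] <;> push_cast <;> omega
      rw [Finset.sum_congr rfl h3, sum_id (n + 1)]
      have harg : ((n + 1 : ℕ) : ℤ) - 1 - ((n : ℤ) + 1) = -1 := by push_cast; ring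
      rw [harg]
      have hT : T (-1) = 0 := by norm_num [T]
      have h4 : ((n + 1 : ℕ) : ℤ) = (n : ℤ) + 1 := by push_cast; ring
      rw [h4, hT]
      ring

def posN (L p i : ℕ) : ℤ := if i < L then (i : ℤ) else if i < L + p then -1 else (L : ℤ)

lemma posN_low {L p i : ℕ} (h : i < L) : posN L p i = (i : ℤ) := by
  unfold posN; rw [if_pos h]

lemma posN_mid {L p i : ℕ} (h1 : ¬ i < L) (h2 : i < L + p) : posN L p i = -1 := by
  unfold posN; rw [if_neg h1, if_pos h2]

lemma posN_high {L p i : ℕ} (h1 : ¬ i < L) (h2 : ¬ i < L + p) : posN L p i = (L : ℤ) := by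
  unfold posN; rw [if_neg h1, if_neg h2]


lemma alg (M P Q s : ℤ) (hQP : Q ≤ P) (hPQ : P ≤ Q + 1) :
    M * (M - 1 + P + Q) ≤ T s + T (2 * M - 1 - 1 - s) + P * (s + 1) + Q * (2 * M - 1 - s) := by
  have hA := two_T s
  have hB := two_T (2 * M - 1 - 1 - s)
  have hx : 0 ≤ (M - 1 - s) * (M - 2 - s) := by
    rcases le_or_gt s (M - 2) with hle | hlt
    · exact mul_nonneg (by omega) (by omega)
    · have hre : (M - 1 - s) * (M - 2 - s) = (s - (M - 1)) * (s - (M - 2)) := by ring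
      rw [hre]
      exact mul_nonneg (by omega) (by omega)
  have hprod1 : 0 ≤ (1 - (P - Q)) * ((M - 1 - s) * (M - 1 - s)) :=
    mul_nonneg (by linarith) (mul_self_nonneg _)
  have hprod2 : 0 ≤ (P - Q) * ((M - 1 - s) * (M - 2 - s)) :=
    mul_nonneg (by linarith) hx
  have hid : 2 * (T s + T (2 * M - 1 - 1 - s) + P * (s + 1) + Q * (2 * M - 1 - s))
      - 2 * (M * (M - 1 + P + Q))
      = 2 * ((1 - (P - Q)) * ((M - 1 - s) * (M - 1 - s))
          + (P - Q) * ((M - 1 - s) * (M - 2 - s)))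
        + (2 * T s - s * (s + 1))
        + (2 * T (2 * M - 1 - 1 - s) - (2 * M - 1 - 1 - s) * (2 * M - 1 - 1 - s + 1)) := by
    ring
  linarith

lemma main (m p q n : ℕ) (hm : 1 ≤ m) (hp : 1 ≤ p) (hqp : q ≤ p) (hpq : p ≤ q + 1)
    (hn : n = (2 * m - 1) + p + q) :
    minStatus (dumbbell n p q) = m * (n - m) := by
  have hLn : 2 * m - 1 ≤ n := by omega
  have hLpn : 2 * m - 1 + p ≤ n := by omega
  have hnpos : 0 < n := by omega
  have hc : m - 1 < n := by omega
  have hve : 2 * m - 1 - 1 < n := by omega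
  set G := dumbbell n p q with hG
  -- adjacency lemmas
  have adjP : ∀ i (hi : i < n) (h1 : i + 1 < n), i + 1 < 2 * m - 1 →
      G.Adj ⟨i, hi⟩ ⟨i + 1, h1⟩ := by
    intro i hi h1 h
    rw [hG]
    simp only [dumbbell, SimpleGraph.fromRel_adj]
    refine ⟨by simp only [ne_eq, Fin.mk.injEq]; omega,
      Or.inl (Or.inl ⟨by trivial, by omega⟩)⟩
  have adjL : ∀ j (hj : j < n), 2 * m - 1 ≤ j → j < 2 * m - 1 + p →
      G.Adj ⟨0, hnpos⟩ ⟨j, hj⟩ := by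
    intro j hj h1 h2
    rw [hG]
    simp only [dumbbell, SimpleGraph.fromRel_adj]
    refine ⟨by simp only [ne_eq, Fin.mk.injEq]; omega,
      Or.inl (Or.inr (Or.inl ⟨by trivial, by omega, by omega⟩))⟩
  have adjR : ∀ j (hj : j < n), 2 * m - 1 + p ≤ j →
      G.Adj ⟨2 * m - 1 - 1, hve⟩ ⟨j, hj⟩ := by
    intro j hj h1
    rw [hG]
    simp only [dumbbell, SimpleGraph.fromRel_adj]
    refine ⟨by simp only [ne_eq, Fin.mk.injEq]; omega,
      Or.inl (Or.inr (Or.inr ⟨by omega, by omega⟩))⟩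
  -- step lemma
  have hstep : ∀ a b : Fin n, G.Adj a b →
      (posN (2 * m - 1) p ↑a - posN (2 * m - 1) p ↑b).natAbs = 1 := by
    have key : ∀ a b : Fin n,
        (((a : ℕ) + 1 = (b : ℕ) ∧ (b : ℕ) < n - p - q) ∨
         ((a : ℕ) = 0 ∧ n - p - q ≤ (b : ℕ) ∧ (b : ℕ) < n - q) ∨
         ((a : ℕ) = n - p - q - 1 ∧ n - q ≤ (b : ℕ))) →
        (posN (2 * m - 1) p ↑a - posN (2 * m - 1) p ↑b).natAbs = 1 := by
      rintro a b (⟨h1, h2⟩ | ⟨h1, h2, h3⟩ | ⟨h1, h2⟩)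
      · rw [posN_low (show (a : ℕ) < 2 * m - 1 by omega),
          posN_low (show (b : ℕ) < 2 * m - 1 by omega)]
        omega
      · rw [posN_low (show (a : ℕ) < 2 * m - 1 by omega),
          posN_mid (show ¬ (b : ℕ) < 2 * m - 1 by omega) (show (b : ℕ) < 2 * m - 1 + p by omega)]
        omega
      · rw [posN_low (show (a : ℕ) < 2 * m - 1 by omega),
          posN_high (show ¬ (b : ℕ) < 2 * m - 1 by omega) (show ¬ (b : ℕ) < 2 * m - 1 + p by omega)]
        omega
    intro a b hab
    rw [hG] at hab
    simp only [dumbbell, SimpleGraph.fromRel_adj] at hab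
    rcases hab.2 with h | h
    · exact key a b h
    · have := key b a h; omega
  -- walk lower bound
  have walkB : ∀ (a b : Fin n) (w : G.Walk a b),
      (posN (2 * m - 1) p ↑a - posN (2 * m - 1) p ↑b).natAbs ≤ w.length := by
    intro a b w
    induction w with
    | nil => simp
    | cons hxy w ih =>
      rename_i x y z
      rw [SimpleGraph.Walk.length_cons]
      have h1 := hstep x y hxy
      have h2 := Int.natAbs_add_le (posN (2 * m - 1) p ↑x - posN (2 * m - 1) p ↑y)
        (posN (2 * m - 1) p ↑y - posN (2 * m - 1) p ↑z)
      rw [sub_add_sub_cancel] at h2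
      omega
  -- reachability
  have reachP : ∀ i (h : i < 2 * m - 1),
      G.Reachable ⟨0, hnpos⟩ ⟨i, lt_of_lt_of_le h hLn⟩ := by
    intro i
    induction i with
    | zero => intro h; exact SimpleGraph.Reachable.refl _
    | succ i ih =>
      intro h
      exact (ih (by omega)).trans (adjP i (by omega) (by omega) h).reachable
  have reachAll : ∀ v : Fin n, G.Reachable ⟨0, hnpos⟩ v := by
    intro v
    rcases lt_or_ge (v : ℕ) (2 * m - 1) with h | h
    · exact reachP (v : ℕ) h
    · rcases lt_or_ge (v : ℕ) (2 * m - 1 + p) with h2 | h2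
      · exact (adjL (v : ℕ) v.isLt h h2).reachable
      · exact (reachP (2 * m - 1 - 1) (by omega)).trans (adjR (v : ℕ) v.isLt h2).reachable
  have hconn : G.Connected := by
    rw [SimpleGraph.connected_iff]
    exact ⟨fun u v => (reachAll u).symm.trans (reachAll v), ⟨⟨0, hnpos⟩⟩⟩
  -- pointwise dist lower bound
  have distLB : ∀ u v : Fin n,
      (posN (2 * m - 1) p ↑u - posN (2 * m - 1) p ↑v).natAbs ≤ G.dist u v := by
    intro u v
    obtain ⟨w, hw⟩ := (hconn.preconnected u v).exists_walk_length_eq_dist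
    rw [← hw]
    exact walkB u v w
  -- dist along path upper bound
  have distP : ∀ (k i j : ℕ) (hi : i < n) (hj : j < n), i + k = j → j < 2 * m - 1 →
      G.dist ⟨i, hi⟩ ⟨j, hj⟩ ≤ k := by
    intro k
    induction k with
    | zero =>
      intro i j hi hj hij hjL
      obtain rfl : i = j := by omega
      simp
    | succ k ih =>
      intro i j hi hj hij hjL
      have h1 : i + 1 < n := by omega
      have hadj := adjP i hi h1 (by omega)
      have t := hconn.dist_triangle (u := (⟨i, hi⟩ : Fin n)) (v := (⟨i + 1, h1⟩ : Fin n))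
        (w := (⟨j, hj⟩ : Fin n))
      have hd1 : G.dist ⟨i, hi⟩ ⟨i + 1, h1⟩ = 1 := SimpleGraph.dist_eq_one_iff_adj.mpr hadj
      have hd2 := ih (i + 1) j h1 hj (by omega) hjL
      omega
  -- dist from center upper bound
  have distC : ∀ v : Fin n, G.dist ⟨m - 1, hc⟩ v ≤
      (posN (2 * m - 1) p (m - 1) - posN (2 * m - 1) p ↑v).natAbs := by
    intro v
    have hposc : posN (2 * m - 1) p (m - 1) = (m : ℤ) - 1 := by
      rw [posN_low (by omega)]; omega
    rcases lt_or_ge (v : ℕ) (2 * m - 1) with h | h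
    · rw [hposc, posN_low h]
      rcases le_or_gt (v : ℕ) (m - 1) with h2 | h2
      · have hd := distP (m - 1 - (v : ℕ)) (v : ℕ) (m - 1) v.isLt hc (by omega) (by omega)
        rw [SimpleGraph.dist_comm] at hd
        exact le_trans hd (by omega)
      · have hd := distP ((v : ℕ) - (m - 1)) (m - 1) (v : ℕ) hc v.isLt (by omega) h
        exact le_trans hd (by omega)
    · rcases lt_or_ge (v : ℕ) (2 * m - 1 + p) with h2 | h2
      · rw [hposc, posN_mid (by omega) h2]
        have t := hconn.dist_triangle (u := (⟨m - 1, hc⟩ : Fin n)) (v := (⟨0, hnpos⟩ : Fin n))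
          (w := v)
        have hd0 := distP (m - 1) 0 (m - 1) hnpos hc (by omega) (by omega)
        rw [SimpleGraph.dist_comm] at hd0
        have hd1 : G.dist ⟨0, hnpos⟩ v = 1 :=
          SimpleGraph.dist_eq_one_iff_adj.mpr (adjL (v : ℕ) v.isLt h h2)
        omega
      · rw [hposc, posN_high (by omega) (by omega)]
        have t := hconn.dist_triangle (u := (⟨m - 1, hc⟩ : Fin n))
          (v := (⟨2 * m - 1 - 1, hve⟩ : Fin n)) (w := v)
        have hd0 := distP (m - 1) (m - 1) (2 * m - 1 - 1) hc hve (by omega) (by omega)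
        have hd1 : G.dist ⟨2 * m - 1 - 1, hve⟩ v = 1 :=
          SimpleGraph.dist_eq_one_iff_adj.mpr (adjR (v : ℕ) v.isLt h2)
        omega
  -- sum evaluation
  have sumEval : ∀ s : ℤ, -1 ≤ s → s ≤ ((2 * m - 1 : ℕ) : ℤ) →
      (∑ v : Fin n, |s - posN (2 * m - 1) p ↑v|) =
        T s + T (((2 * m - 1 : ℕ) : ℤ) - 1 - s) + p * (s + 1) +
          q * (((2 * m - 1 : ℕ) : ℤ) - s) := by
    intro s h1 h2
    rw [Fin.sum_univ_eq_sum_range (fun i => |s - posN (2 * m - 1) p i|) n]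
    rw [Finset.range_eq_Ico,
      ← Finset.sum_Ico_consecutive _ (Nat.zero_le (2 * m - 1 + p)) hLpn,
      ← Finset.sum_Ico_consecutive _ (Nat.zero_le (2 * m - 1))
        (by omega : 2 * m - 1 ≤ 2 * m - 1 + p)]
    have eA : (∑ i ∈ Finset.Ico 0 (2 * m - 1), |s - posN (2 * m - 1) p i|) =
        T s + T (((2 * m - 1 : ℕ) : ℤ) - 1 - s) := by
      rw [← Finset.range_eq_Ico]
      have hcg : ∀ k ∈ Finset.range (2 * m - 1),
          |s - posN (2 * m - 1) p k| = |s - (k : ℤ)| := by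
        intro k hk
        rw [posN_low (Finset.mem_range.mp hk)]
      rw [Finset.sum_congr rfl hcg, sum_abs (2 * m - 1) s h1 h2]
    have eB : (∑ i ∈ Finset.Ico (2 * m - 1) (2 * m - 1 + p), |s - posN (2 * m - 1) p i|) =
        p * (s + 1) := by
      have hcg : ∀ k ∈ Finset.Ico (2 * m - 1) (2 * m - 1 + p),
          |s - posN (2 * m - 1) p k| = s + 1 := by
        intro k hk
        obtain ⟨hk1, hk2⟩ := Finset.mem_Ico.mp hk
        rw [posN_mid (by omega) hk2, sub_neg_eq_add]
        exact abs_of_nonneg (by omega)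
      rw [Finset.sum_congr rfl hcg, Finset.sum_const, Nat.card_Ico]
      simp only [nsmul_eq_mul]
      congr 1
      omega
    have eC : (∑ i ∈ Finset.Ico (2 * m - 1 + p) n, |s - posN (2 * m - 1) p i|) =
        q * (((2 * m - 1 : ℕ) : ℤ) - s) := by
      have hcg : ∀ k ∈ Finset.Ico (2 * m - 1 + p) n,
          |s - posN (2 * m - 1) p k| = ((2 * m - 1 : ℕ) : ℤ) - s := by
        intro k hk
        obtain ⟨hk1, hk2⟩ := Finset.mem_Ico.mp hk
        rw [posN_high (by omega) (by omega), abs_sub_comm]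
        exact abs_of_nonneg (by omega)
      rw [Finset.sum_congr rfl hcg, Finset.sum_const, Nat.card_Ico]
      simp only [nsmul_eq_mul]
      congr 1
      omega
    rw [eA, eB, eC]
  -- status lower bound
  have statusLB : ∀ u : Fin n, m * (n - m) ≤ status G u := by
    intro u
    have h1 : (∑ v : Fin n, (posN (2 * m - 1) p ↑u - posN (2 * m - 1) p ↑v).natAbs) ≤
        ∑ v : Fin n, G.dist u v :=
      Finset.sum_le_sum (fun v _ => distLB u v)
    simp only [status]
    refine le_trans ?_ h1
    have hsb1 : -1 ≤ posN (2 * m - 1) p ↑u := by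
      rcases lt_or_ge (u : ℕ) (2 * m - 1) with h | h
      · rw [posN_low h]; omega
      · rcases lt_or_ge (u : ℕ) (2 * m - 1 + p) with h2 | h2
        · rw [posN_mid (by omega) h2]
        · rw [posN_high (by omega) (by omega)]; omega
    have hsb2 : posN (2 * m - 1) p ↑u ≤ ((2 * m - 1 : ℕ) : ℤ) := by
      rcases lt_or_ge (u : ℕ) (2 * m - 1) with h | h
      · rw [posN_low h]; omega
      · rcases lt_or_ge (u : ℕ) (2 * m - 1 + p) with h2 | h2
        · rw [posN_mid (by omega) h2]; omega
        · rw [posN_high (by omega) (by omega)]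
    rw [← Nat.cast_le (α := ℤ), Nat.cast_sum]
    have hcast : ∀ v : Fin n,
        (((posN (2 * m - 1) p ↑u - posN (2 * m - 1) p ↑v).natAbs : ℕ) : ℤ) =
          |posN (2 * m - 1) p ↑u - posN (2 * m - 1) p ↑v| :=
      fun v => Int.natCast_natAbs _
    rw [Finset.sum_congr rfl (fun v _ => hcast v), sumEval _ hsb1 hsb2]
    have hnm : n - m = m - 1 + p + q := by omega
    rw [hnm, Nat.cast_mul]
    have e2 : ((m - 1 + p + q : ℕ) : ℤ) = (m : ℤ) - 1 + p + q := by omega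
    have e3 : ((2 * m - 1 : ℕ) : ℤ) = 2 * (m : ℤ) - 1 := by omega
    rw [e2, e3]
    have hQP : (q : ℤ) ≤ p := by exact_mod_cast hqp
    have hPQ : (p : ℤ) ≤ q + 1 := by exact_mod_cast hpq
    exact alg (m : ℤ) (p : ℤ) (q : ℤ) _ hQP hPQ
  -- status of center upper bound
  have statusC : status G ⟨m - 1, hc⟩ ≤ m * (n - m) := by
    have h1 : (∑ v : Fin n, G.dist ⟨m - 1, hc⟩ v) ≤
        ∑ v : Fin n, (posN (2 * m - 1) p (m - 1) - posN (2 * m - 1) p ↑v).natAbs :=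
      Finset.sum_le_sum (fun v _ => distC v)
    simp only [status]
    refine le_trans h1 (le_of_eq ?_)
    have hposc : posN (2 * m - 1) p (m - 1) = (m : ℤ) - 1 := by
      rw [posN_low (by omega)]; omega
    rw [← Nat.cast_inj (R := ℤ), Nat.cast_sum]
    have hcast : ∀ v : Fin n,
        (((posN (2 * m - 1) p (m - 1) - posN (2 * m - 1) p ↑v).natAbs : ℕ) : ℤ) =
          |posN (2 * m - 1) p (m - 1) - posN (2 * m - 1) p ↑v| :=
      fun v => Int.natCast_natAbs _
    rw [Finset.sum_congr rfl (fun v _ => hcast v), hposc,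
      sumEval ((m : ℤ) - 1) (by omega) (by omega)]
    have hnm : n - m = m - 1 + p + q := by omega
    rw [hnm, Nat.cast_mul]
    have e2 : ((m - 1 + p + q : ℕ) : ℤ) = (m : ℤ) - 1 + p + q := by omega
    have e3 : ((2 * m - 1 : ℕ) : ℤ) = 2 * (m : ℤ) - 1 := by omega
    rw [e2, e3]
    have harg : 2 * (m : ℤ) - 1 - 1 - ((m : ℤ) - 1) = (m : ℤ) - 1 := by ring
    rw [harg]
    have hA := two_T ((m : ℤ) - 1)
    linarith [hA]
  -- conclude
  have key1 : minStatus G ≤ m * (n - m) := by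
    simp only [minStatus]
    refine le_trans ?_ statusC
    exact Nat.sInf_le ⟨⟨m - 1, hc⟩, rfl⟩
  have key2 : m * (n - m) ≤ minStatus G := by
    simp only [minStatus]
    refine le_csInf ⟨status G ⟨m - 1, hc⟩, ⟨⟨m - 1, hc⟩, rfl⟩⟩ ?_
    rintro x ⟨u, rfl⟩
    exact statusLB u
  omega

end Stmt8Helpers

/-- The minimum status of `D_n(⌈(n+1)/2⌉ - m, ⌊(n+1)/2⌋ - m)` equals `m(n-m)`. -/
theorem stmt8 (n m : ℕ) (h4 : 4 ≤ n) (hm1 : 1 ≤ m) (hm2 : 2 * m ≤ n) :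
    minStatus (dumbbell n ((n + 2) / 2 - m) ((n + 1) / 2 - m)) = m * (n - m) := by
  exact Stmt8Helpers.main m ((n + 2) / 2 - m) ((n + 1) / 2 - m) n hm1 (by omega) (by omega)
    (by omega) (by omega)
end

section
/- For integers n, p, q with p >= q + 2 and 2(p + q) < n, the minimum status of the caterpillar C_n(p-1, q+1) is strictly greater than the minimum status of C_n(p, q). -/
open SimpleGraph

variable {V : Type*}

open SimpleGraph Finset

/-- position of a vertex of `caterpillar n p q` on the spine -/
def cPi (n p q v : ℕ) : ℕ :=
  if v < n - p - q then v else if v < n - q then v - (n - p - q) else v - p - q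

/-- height (0 = spine vertex, 1 = pendant vertex) -/
def cH (n p q v : ℕ) : ℕ := if v < n - p - q then 0 else 1

/-- candidate distance function -/
def cD (n p q : ℕ) (u v : Fin n) : ℕ :=
  if u = v then 0
  else Nat.dist (cPi n p q u) (cPi n p q v) + cH n p q u + cH n p q v

lemma cPi_lt {n p q : ℕ} (hq : 1 ≤ q) (hn : 2 * (p + q) < n) {v : ℕ} (hv : v < n) :
    cPi n p q v < n - p - q := by
  unfold cPi; split_ifs <;> omega

lemma cat_adj {n p q : ℕ} (hp : 1 ≤ p) (hq : 1 ≤ q) (hn : 2 * (p + q) < n) (u v : Fin n) :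
    (caterpillar n p q).Adj u v ↔ ((u : ℕ) ≠ v ∧
      ((cH n p q u = 0 ∧ cH n p q v = 0 ∧ Nat.dist (cPi n p q u) (cPi n p q v) = 1) ∨
       (cH n p q u + cH n p q v = 1 ∧ cPi n p q u = cPi n p q v))) := by
  have hu := u.isLt
  have hv := v.isLt
  simp only [caterpillar, fromRel_adj, ne_eq, Fin.ext_iff, cPi, cH, Nat.dist]
  split_ifs <;> simp only [false_and, and_false, false_or, or_false, true_and, and_true] <;> omega

open SimpleGraph Finset

lemma dist_eq_of {W : Type*} (G : SimpleGraph W) (d : W → W → ℕ)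
    (hsymm : ∀ u v, d u v = d v u)
    (hzero : ∀ u v, d u v = 0 → u = v)
    (hself : ∀ u, d u u = 0)
    (hlip : ∀ u a b, G.Adj a b → d u b ≤ d u a + 1)
    (hstep : ∀ u v, d u v ≠ 0 → ∃ w, G.Adj w v ∧ d u w + 1 = d u v)
    (u v : W) : G.dist u v = d u v := by
  have upper : ∀ k (u v : W), d u v = k → ∃ p : G.Walk u v, p.length ≤ k := by
    intro k
    induction k with
    | zero => intro u v h; obtain rfl := hzero u v h; exact ⟨.nil, by simp⟩
    | succ k ih =>
      intro u v h
      obtain ⟨w, hadj, hw⟩ := hstep u v (by omega)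
      obtain ⟨p, hp⟩ := ih u w (by omega)
      exact ⟨p.concat hadj, by rw [SimpleGraph.Walk.length_concat]; omega⟩
  have lower : ∀ (u v : W) (p : G.Walk u v), d u v ≤ p.length := by
    intro u v p
    induction p with
    | nil => simp [hself]
    | @cons a b c hadj p ih =>
      have h1 : d a c ≤ d b c + 1 := by
        calc d a c = d c a := hsymm a c
        _ ≤ d c b + 1 := hlip c b a hadj.symm
        _ = d b c + 1 := by rw [hsymm]
      simp only [SimpleGraph.Walk.length_cons]
      omega
  obtain ⟨p, hp⟩ := upper (d u v) u v rfl
  have h1 := SimpleGraph.dist_le p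
  have h2 : d u v ≤ G.dist u v := by
    obtain ⟨w, hw⟩ := (Reachable.exists_walk_length_eq_dist ⟨p⟩ : _)
    calc d u v ≤ w.length := lower u v w
    _ = G.dist u v := hw
  omega

lemma cPi_of_lt {n p q x : ℕ} (h : x < n - p - q) : cPi n p q x = x := if_pos h

lemma cH_of_lt {n p q x : ℕ} (h : x < n - p - q) : cH n p q x = 0 := if_pos h

lemma cH_of_ge {n p q x : ℕ} (h : ¬ x < n - p - q) : cH n p q x = 1 := if_neg h

lemma cD_of_ne {n p q : ℕ} {u v : Fin n} (h : u ≠ v) :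
    cD n p q u v = Nat.dist (cPi n p q u) (cPi n p q v) + cH n p q u + cH n p q v := if_neg h

lemma cat_dist {n p q : ℕ} (hp : 1 ≤ p) (hq : 1 ≤ q) (hn : 2 * (p + q) < n) (u v : Fin n) :
    (caterpillar n p q).dist u v = cD n p q u v := by
  apply dist_eq_of
  · -- symmetry
    intro a b
    by_cases hab : a = b
    · subst hab; rfl
    · rw [cD_of_ne hab, cD_of_ne (Ne.symm hab), Nat.dist_comm]; ring
  · -- zero implies eq
    intro a b h
    by_cases hab : a = b
    · exact hab
    · rw [cD_of_ne hab] at h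
      apply Fin.ext
      obtain ⟨a, ha⟩ := a; obtain ⟨b, hb⟩ := b
      simp only [Fin.val_mk] at h ⊢
      revert h; unfold cPi cH Nat.dist; split_ifs <;> first | omega | simp
  · intro a; simp [cD]
  · -- Lipschitz
    intro w a b hadj
    rw [cat_adj hp hq hn] at hadj
    obtain ⟨hne, hc⟩ := hadj
    by_cases hwb : w = b
    · simp [cD, hwb]
    by_cases hwa : w = a
    · subst hwa
      rw [cD_of_ne hwb, cD, if_pos rfl]
      simp only [Nat.dist] at hc ⊢; omega
    · rw [cD_of_ne hwb, cD_of_ne hwa]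
      simp only [Nat.dist] at hc ⊢; omega
  · -- step towards u
    intro u v hne0
    have hneq : u ≠ v := fun h => hne0 (by simp [cD, h])
    obtain ⟨u, hul⟩ := u; obtain ⟨v, hvl⟩ := v
    have hvne : u ≠ v := fun h => hneq (Fin.ext h)
    have hLn : n - p - q ≤ n := by omega
    by_cases hv : v < n - p - q
    · -- v is a spine vertex
      have hPv : cPi n p q v = v := cPi_of_lt hv
      have hHv : cH n p q v = 0 := cH_of_lt hv
      by_cases hpu : cPi n p q u = v
      · -- u is the pendant above v
        have hHu : cH n p q u = 1 := by
          rcases Nat.lt_or_ge u (n - p - q) with h | h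
          · exact absurd (by rw [← hpu, cPi_of_lt h]) hvne
          · exact cH_of_ge (by omega)
        refine ⟨⟨u, hul⟩, ?_, ?_⟩
        · rw [cat_adj hp hq hn]
          exact ⟨hvne, Or.inr ⟨by simp only [Fin.val_mk]; omega, by simp only [Fin.val_mk]; rw [hpu, hPv]⟩⟩
        · rw [cD, if_pos rfl, cD_of_ne hneq]
          simp only [Fin.val_mk, hpu, hPv, Nat.dist_self]; omega
      · have hPu := cPi_lt hq hn hul
        rcases Nat.lt_or_ge (cPi n p q u) v with hlt | hgt
        · -- w = v - 1
          have hw1 : v - 1 < n := by omega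
          have hw1L : v - 1 < n - p - q := by omega
          refine ⟨⟨v - 1, hw1⟩, ?_, ?_⟩
          · rw [cat_adj hp hq hn]
            refine ⟨by simp only [Fin.val_mk]; omega,
              Or.inl ⟨cH_of_lt hw1L, hHv, ?_⟩⟩
            simp only [Fin.val_mk, hPv, cPi_of_lt hw1L, Nat.dist]; omega
          · by_cases huw : (⟨u, hul⟩ : Fin n) = ⟨v - 1, hw1⟩
            · have h1 : u = v - 1 := by
                have := congrArg Fin.val huw; simpa using this
              rw [cD, if_pos huw, cD_of_ne hneq]
              subst h1
              simp only [Fin.val_mk, hPv, cPi_of_lt hw1L, hHv, cH_of_lt hw1L, Nat.dist]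
              omega
            · rw [cD_of_ne huw, cD_of_ne hneq]
              simp only [Fin.val_mk, hPv, cPi_of_lt hw1L, hHv, cH_of_lt hw1L, Nat.dist]
              omega
        · -- w = v + 1
          have hgt' : v < cPi n p q u := by omega
          have hw1L : v + 1 < n - p - q := by omega
          have hw1 : v + 1 < n := by omega
          refine ⟨⟨v + 1, hw1⟩, ?_, ?_⟩
          · rw [cat_adj hp hq hn]
            refine ⟨by simp only [Fin.val_mk]; omega,
              Or.inl ⟨cH_of_lt hw1L, hHv, ?_⟩⟩
            simp only [Fin.val_mk, hPv, cPi_of_lt hw1L, Nat.dist]; omega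
          · by_cases huw : (⟨u, hul⟩ : Fin n) = ⟨v + 1, hw1⟩
            · have h1 : u = v + 1 := by
                have := congrArg Fin.val huw; simpa using this
              rw [cD, if_pos huw, cD_of_ne hneq]
              subst h1
              simp only [Fin.val_mk, hPv, cPi_of_lt hw1L, hHv, cH_of_lt hw1L, Nat.dist]
              omega
            · rw [cD_of_ne huw, cD_of_ne hneq]
              simp only [Fin.val_mk, hPv, cPi_of_lt hw1L, hHv, cH_of_lt hw1L, Nat.dist]
              omega
    · -- v is a pendant vertex: w = spine vertex below v
      have hHv : cH n p q v = 1 := cH_of_ge hv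
      have hPlt := cPi_lt hq hn hvl
      have hwn : cPi n p q v < n := lt_of_lt_of_le hPlt hLn
      refine ⟨⟨cPi n p q v, hwn⟩, ?_, ?_⟩
      · rw [cat_adj hp hq hn]
        refine ⟨by simp only [Fin.val_mk]; omega, Or.inr ⟨?_, ?_⟩⟩
        · simp only [Fin.val_mk, cH_of_lt hPlt, hHv]
        · simp only [Fin.val_mk, cPi_of_lt hPlt]
      · by_cases huw : (⟨u, hul⟩ : Fin n) = ⟨cPi n p q v, hwn⟩
        · have h1 : u = cPi n p q v := by
            have := congrArg Fin.val huw; simpa using this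
          rw [cD, if_pos huw, cD_of_ne hneq]
          simp only [Fin.val_mk, h1, cPi_of_lt hPlt, hHv, cH_of_lt hPlt, Nat.dist_self]
        · rw [cD_of_ne huw, cD_of_ne hneq]
          simp only [Fin.val_mk, cPi_of_lt hPlt, hHv, cH_of_lt hPlt]

/-- sum of distances from x to the ideal caterpillar positions -/
def cT (n p q x : ℕ) : ℕ :=
  (∑ j ∈ Finset.range (n - p - q), Nat.dist x j) +
  (∑ j ∈ Finset.range p, Nat.dist x j) +
  (∑ j ∈ Finset.range q, Nat.dist x (n - p - q - q + j))

lemma sum_range_split (f : ℕ → ℕ) {L n : ℕ} (h : L ≤ n) :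
    ∑ i ∈ Finset.range n, f i
      = (∑ i ∈ Finset.range L, f i) + ∑ i ∈ Finset.range (n - L), f (L + i) := by
  have h1 : ∑ i ∈ Finset.Ico 0 L, f i + ∑ i ∈ Finset.Ico L n, f i = ∑ i ∈ Finset.Ico 0 n, f i :=
    Finset.sum_Ico_consecutive f (Nat.zero_le L) h
  rw [← Finset.range_eq_Ico, ← Finset.range_eq_Ico] at h1
  rw [← h1, Finset.sum_Ico_eq_sum_range]

lemma sum_cH {n p q : ℕ} (hn : 2 * (p + q) < n) :
    (∑ v : Fin n, cH n p q (v : ℕ)) = p + q := by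
  rw [Fin.sum_univ_eq_sum_range (fun i => cH n p q i) n,
    sum_range_split _ (show n - p - q ≤ n by omega),
    Finset.sum_congr rfl (fun i hi => cH_of_lt (Finset.mem_range.mp hi)),
    Finset.sum_congr rfl (fun i (hi : i ∈ Finset.range (n - (n - p - q))) =>
      cH_of_ge (x := (n - p - q) + i) (by omega))]
  simp only [Finset.sum_const, smul_eq_mul, mul_one, Finset.card_range, Finset.sum_const_zero]
  omega

lemma sum_dist {n p q : ℕ} (hn : 2 * (p + q) < n) (x : ℕ) :
    (∑ v : Fin n, Nat.dist x (cPi n p q (v : ℕ))) = cT n p q x := by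
  rw [Fin.sum_univ_eq_sum_range (fun i => Nat.dist x (cPi n p q i)) n,
    sum_range_split _ (show n - p - q ≤ n by omega),
    sum_range_split (fun i => Nat.dist x (cPi n p q ((n - p - q) + i)))
      (show p ≤ n - (n - p - q) by omega),
    Finset.sum_congr rfl (fun i hi => by
      rw [cPi_of_lt (Finset.mem_range.mp hi)]),
    Finset.sum_congr rfl (fun i (hi : i ∈ Finset.range p) => by
      have hi' := Finset.mem_range.mp hi
      rw [show cPi n p q ((n - p - q) + i) = i by unfold cPi; split_ifs <;> omega]),
    Finset.sum_congr rfl (fun i (hi : i ∈ Finset.range (n - (n - p - q) - p)) => by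
      have hi' := Finset.mem_range.mp hi
      rw [show cPi n p q ((n - p - q) + (p + i)) = n - p - q - q + i by
        unfold cPi; split_ifs <;> omega])]
  unfold cT
  rw [show n - (n - p - q) - p = q by omega]
  ring

lemma cat_status {n p q : ℕ} (hp : 1 ≤ p) (hq : 1 ≤ q) (hn : 2 * (p + q) < n) (u : Fin n) :
    status (caterpillar n p q) u + 2 * cH n p q u
      = cT n p q (cPi n p q u) + (p + q) + n * cH n p q u := by
  have key : ∀ v : Fin n,
      (caterpillar n p q).dist u v + (if v = u then 2 * cH n p q (u : ℕ) else 0)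
        = Nat.dist (cPi n p q (u : ℕ)) (cPi n p q (v : ℕ)) + cH n p q (u : ℕ) + cH n p q (v : ℕ) := by
    intro v
    rw [cat_dist hp hq hn]
    by_cases hv : v = u
    · subst hv; rw [cD, if_pos rfl, if_pos rfl, Nat.dist_self]; ring
    · rw [cD_of_ne (fun h => hv (h.symm)), if_neg hv]; ring
  have hsum : (∑ v : Fin n, ((caterpillar n p q).dist u v + (if v = u then 2 * cH n p q (u : ℕ) else 0)))
      = ∑ v : Fin n, (Nat.dist (cPi n p q (u : ℕ)) (cPi n p q (v : ℕ)) + cH n p q (u : ℕ) + cH n p q (v : ℕ)) :=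
    Finset.sum_congr rfl (fun v _ => key v)
  rw [Finset.sum_add_distrib, Finset.sum_ite_eq' Finset.univ u (fun _ => 2 * cH n p q (u : ℕ))] at hsum
  simp only [Finset.mem_univ, if_pos] at hsum
  rw [Finset.sum_add_distrib, Finset.sum_add_distrib, sum_dist hn, sum_cH hn,
    Finset.sum_const, Finset.card_univ, Fintype.card_fin, smul_eq_mul] at hsum
  unfold status
  omega

lemma dist_sum_step {m x : ℕ} (h : x + 1 ≤ m) :
    (∑ j ∈ Finset.range m, Nat.dist (x+1) j) + (m - (x+1))
      = (∑ j ∈ Finset.range m, Nat.dist x j) + (x+1) := by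
  rw [sum_range_split (fun j => Nat.dist (x+1) j) h,
      sum_range_split (fun j => Nat.dist x j) h,
      Finset.sum_congr rfl (fun j hj => show Nat.dist (x+1) j = Nat.dist x j + 1 by
        have := Finset.mem_range.mp hj; simp only [Nat.dist]; omega),
      Finset.sum_congr rfl (fun j (hj : j ∈ Finset.range (m - (x+1))) =>
        show Nat.dist (x+1) (x+1+j) = j by simp only [Nat.dist]; omega),
      Finset.sum_congr rfl (fun j (hj : j ∈ Finset.range (m - (x+1))) =>
        show Nat.dist x (x+1+j) = j + 1 by simp only [Nat.dist]; omega),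
      Finset.sum_add_distrib, Finset.sum_add_distrib]
  simp only [Finset.sum_const, smul_eq_mul, mul_one, Finset.card_range]
  omega

lemma dist_sum_step_all {m x : ℕ} (h : m ≤ x + 1) :
    (∑ j ∈ Finset.range m, Nat.dist (x+1) j) = (∑ j ∈ Finset.range m, Nat.dist x j) + m := by
  rw [Finset.sum_congr rfl (fun j hj => show Nat.dist (x+1) j = Nat.dist x j + 1 by
      have := Finset.mem_range.mp hj; simp only [Nat.dist]; omega),
    Finset.sum_add_distrib]
  simp

lemma dist_sum_third {k y x : ℕ} :
    (∑ j ∈ Finset.range k, Nat.dist x (y+j)) ≤ (∑ j ∈ Finset.range k, Nat.dist (x+1) (y+j)) + k := by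
  calc (∑ j ∈ Finset.range k, Nat.dist x (y+j))
      ≤ ∑ j ∈ Finset.range k, (Nat.dist (x+1) (y+j) + 1) :=
        Finset.sum_le_sum (fun j _ => by simp only [Nat.dist]; omega)
    _ = _ := by rw [Finset.sum_add_distrib]; simp

lemma cT_step {n p q x : ℕ} (hx1 : x + 1 ≤ n - p - q) (hx2 : p ≤ x + 1) :
    cT n p q x + (x + 1) + p + (x + 1) ≤ cT n p q (x+1) + (n - p - q) + q := by
  unfold cT
  have h1 := dist_sum_step (m := n - p - q) (x := x) hx1
  have h2 := dist_sum_step_all (m := p) (x := x) hx2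
  have h3 := dist_sum_third (k := q) (y := n - p - q - q) (x := x)
  omega

lemma cT_grow {n p q c : ℕ} (h2 : 2*(p+q) < n) (hc : p ≤ c + 1) :
    ∀ D : ℕ, c + D ≤ n - p - q →
      (cT n p q c : ℤ) + D*D + D*(2*c+1+2*p - n) ≤ (cT n p q (c+D) : ℤ) := by
  intro D
  induction D with
  | zero => intro _; simp
  | succ D ih =>
    intro hD
    have hstep := cT_step (n := n) (p := p) (q := q) (x := c + D) (by omega) (by omega)
    have ihh := ih (by omega)
    have hstepz : (cT n p q (c+D) : ℤ) + (c+D+1) + p + (c+D+1)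
        ≤ (cT n p q (c+D+1) : ℤ) + ((n : ℤ) - p - q) + q := by
      omega
    have harr : ((c + (D+1) : ℕ) : ℤ) = ((c + D + 1 : ℕ) : ℤ) := by push_cast; ring
    rw [show c + (D+1) = c + D + 1 by ring]
    push_cast
    push_cast at ihh
    nlinarith [ihh, hstepz]

lemma cT_rel {n p q : ℕ} (h1 : q + 2 ≤ p) (h2 : 2*(p+q) < n) (x : ℕ) :
    cT n (p-1) (q+1) x + Nat.dist x (p-1)
      = cT n p q x + Nat.dist x (n - p - q - q - 1) := by
  unfold cT
  have e0 : n - (p-1) - (q+1) = n - p - q := by omega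
  rw [e0]
  have e2 : (∑ j ∈ Finset.range p, Nat.dist x j)
      = (∑ j ∈ Finset.range (p-1), Nat.dist x j) + Nat.dist x (p-1) := by
    conv_lhs => rw [show p = p - 1 + 1 by omega]
    rw [Finset.sum_range_succ]
  have e3 : (∑ j ∈ Finset.range (q+1), Nat.dist x (n - p - q - (q+1) + j))
      = Nat.dist x (n - p - q - q - 1)
        + (∑ j ∈ Finset.range q, Nat.dist x (n - p - q - q + j)) := by
    rw [Finset.sum_range_succ' (fun j => Nat.dist x (n - p - q - (q+1) + j)) q]
    have e4 : ∀ j, n - p - q - (q+1) + (j+1) = n - p - q - q + j := by intro j; omega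
    have e5 : n - p - q - (q+1) + 0 = n - p - q - q - 1 := by omega
    rw [Finset.sum_congr rfl (fun j _ => by rw [e4 j]), e5]
    ring
  rw [e2, e3]
  ring

lemma cT_compare {n p q : ℕ} (h1 : q + 2 ≤ p) (h2 : 2*(p+q) < n) (h3 : 1 ≤ q) {x : ℕ}
    (hx : x < n - p - q) :
    ∃ y, y < n - p - q ∧ cT n p q y + 1 ≤ cT n (p-1) (q+1) x := by
  have hrel := cT_rel h1 h2 x
  -- a = p - 1, b = n - p - q - q - 1, c = (a + b - 1)/2
  by_cases hxc : x ≤ ((p - 1) + (n - p - q - q - 1) - 1) / 2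
  · refine ⟨x, hx, ?_⟩
    have hd : Nat.dist x (p-1) + 1 ≤ Nat.dist x (n - p - q - q - 1) := by
      simp only [Nat.dist]; omega
    omega
  · set c := ((p - 1) + (n - p - q - q - 1) - 1) / 2 with hcdef
    have hca : p - 1 ≤ c := by omega
    have hcb : c < n - p - q - q - 1 := by omega
    refine ⟨c, by omega, ?_⟩
    have hgrow := cT_grow h2 (c := c) (by omega) (x - c) (by omega)
    rw [show c + (x - c) = x by omega] at hgrow
    have hdist : (Nat.dist x (p-1) : ℤ) ≤ (Nat.dist x (n - p - q - q - 1) : ℤ)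
        + 2*((x : ℤ) - c) - 1 := by
      simp only [Nat.dist]; push_cast; omega
    have hrelz : (cT n (p-1) (q+1) x : ℤ) + (Nat.dist x (p-1) : ℤ)
        = (cT n p q x : ℤ) + (Nat.dist x (n - p - q - q - 1) : ℤ) := by exact_mod_cast hrel
    -- quadratic part
    have hD1 : (1 : ℤ) ≤ ((x - c : ℕ) : ℤ) := by omega
    have hK1 : (1 : ℤ) ≤ 2*(c:ℤ)+1+2*p - n := by omega
    have hquad : (2:ℤ) * ((x - c : ℕ) : ℤ)
        ≤ ((x - c : ℕ) : ℤ) * ((x - c : ℕ) : ℤ) + ((x - c : ℕ) : ℤ) * (2*(c:ℤ)+1+2*p - n) := by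
      nlinarith [hD1, hK1]
    have hxc' : ((x - c : ℕ) : ℤ) = (x : ℤ) - c := by omega
    rw [hxc'] at hgrow hquad
    have : (cT n p q c : ℤ) + 1 ≤ (cT n (p-1) (q+1) x : ℤ) := by nlinarith [hgrow, hquad, hrelz, hdist]
    exact_mod_cast this

lemma minStatus_le' {W : Type*} [Fintype W] (G : SimpleGraph W) (u : W) :
    minStatus G ≤ status G u := Nat.sInf_le ⟨u, rfl⟩

lemma minStatus_attained {W : Type*} [Fintype W] [Nonempty W] (G : SimpleGraph W) :
    ∃ u, minStatus G = status G u := by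
  obtain ⟨u, hu⟩ := Nat.sInf_mem (Set.range_nonempty (status G))
  exact ⟨u, hu.symm⟩


/-- `s(C_n(p-1, q+1)) > s(C_n(p, q))` when `p ≥ q + 2` and `2(p+q) < n`. -/
theorem stmt10 (n p q : ℕ) (h1 : q + 2 ≤ p) (h2 : 2 * (p + q) < n) (h3 : 1 ≤ q) :
    minStatus (caterpillar n p q) < minStatus (caterpillar n (p - 1) (q + 1)) := by
  have hp : 1 ≤ p := by omega
  have hp' : 1 ≤ p - 1 := by omega
  have hq' : 1 ≤ q + 1 := by omega
  have h2' : 2 * ((p-1) + (q+1)) < n := by omega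
  haveI : Nonempty (Fin n) := ⟨⟨0, by omega⟩⟩
  obtain ⟨u0, hu0⟩ := minStatus_attained (caterpillar n (p-1) (q+1))
  have hstat := cat_status hp' hq' h2' u0
  have hxL : cPi n (p-1) (q+1) u0 < n - (p-1) - (q+1) := cPi_lt hq' h2' u0.isLt
  have hxL' : cPi n (p-1) (q+1) u0 < n - p - q := by omega
  obtain ⟨y, hyL, hy⟩ := cT_compare h1 h2 h3 hxL'
  have hHcases : cH n (p-1) (q+1) (u0 : ℕ) = 0 ∨ cH n (p-1) (q+1) (u0 : ℕ) = 1 := by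
    unfold cH; split_ifs <;> simp
  have hlow : cT n (p-1) (q+1) (cPi n (p-1) (q+1) u0) + (p + q)
      ≤ status (caterpillar n (p-1) (q+1)) u0 := by
    have e1 : p - 1 + (q + 1) = p + q := by omega
    rw [e1] at hstat
    rcases hHcases with h | h <;> rw [h] at hstat <;> omega
  have hyn : y < n := by omega
  have hsy := cat_status hp h3 h2 (⟨y, hyn⟩ : Fin n)
  rw [show cPi n p q ((⟨y, hyn⟩ : Fin n) : ℕ) = y from cPi_of_lt hyL,
      show cH n p q ((⟨y, hyn⟩ : Fin n) : ℕ) = 0 from cH_of_lt hyL] at hsy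
  calc minStatus (caterpillar n p q) ≤ status (caterpillar n p q) ⟨y, hyn⟩ := minStatus_le' _ _
    _ < status (caterpillar n (p-1) (q+1)) u0 := by omega
    _ = minStatus (caterpillar n (p-1) (q+1)) := hu0.symm
end

section
/- Let T be a tree on n vertices with domination number gamma, where gamma > floor(n/3). Then the diameter of T is at most 2n - 3*gamma + 1. -/
open SimpleGraph

variable {V : Type*}

/-- Predecessor on a geodesic: if `dist u v = k + 1` then `v` has a neighbor at
distance `k` from `u`. -/
lemma stmt12_pred (G : SimpleGraph V) (hc : G.Connected) (u v : V) (k : ℕ)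
    (h : G.dist u v = k + 1) : ∃ w, G.Adj w v ∧ G.dist u w = k := by
  obtain ⟨p, hp⟩ := hc.exists_walk_length_eq_dist u v
  have hne : v ≠ u := by
    rintro rfl; simp [SimpleGraph.dist_self] at h
  obtain ⟨w, hadj, q, hq⟩ := (p.reverse).exists_eq_cons_of_ne hne
  have hlen : q.length = k := by
    have := congrArg SimpleGraph.Walk.length hq
    simp [Walk.length_reverse, hp, h] at this
    omega
  refine ⟨w, hadj.symm, le_antisymm ?_ ?_⟩
  · have := SimpleGraph.dist_le q.reverse
    simpa [Walk.length_reverse, hlen] using this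
  · have h1 : G.dist u v ≤ G.dist u w + G.dist w v := hc.dist_triangle
    have h2 : G.dist w v ≤ 1 := by
      simpa using SimpleGraph.dist_le hadj.symm.toWalk
    omega

/-- A tree on `n` vertices with domination number `γ > ⌊n/3⌋` has diameter at
most `2n - 3γ + 1`. -/
theorem stmt12 [Fintype V] (T : SimpleGraph V) (n γ : ℕ)
    (hn : Fintype.card V = n) (hT : T.IsTree)
    (hγ : domNumber T = γ) (h : n / 3 < γ) :
    (T.diam : ℤ) ≤ 2 * (n : ℤ) - 3 * (γ : ℤ) + 1 := by
  classical
  have hc : T.Connected := hT.isConnected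
  have hne : Nonempty V := hc.nonempty
  obtain ⟨u, v0, huv⟩ := T.exists_dist_eq_diam
  set d := T.diam with hd
  -- there is a vertex at every depth `i ≤ d`
  have hdepth : ∀ i ≤ d, ∃ x, T.dist u x = i := by
    have key : ∀ k, k ≤ d → ∃ x, T.dist u x = d - k := by
      intro k
      induction k with
      | zero => intro _; exact ⟨v0, huv⟩
      | succ m ih =>
        intro hm
        obtain ⟨x, hx⟩ := ih (by omega)
        have hx' : T.dist u x = (d - (m + 1)) + 1 := by omega
        obtain ⟨w, _, hw⟩ := stmt12_pred T hc u x _ hx'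
        exact ⟨w, hw⟩
    intro i hi
    obtain ⟨x, hx⟩ := key (d - i) (by omega)
    exact ⟨x, by omega⟩
  set C : Set V := {x | ¬ ∃ w, T.Adj x w ∧ T.dist u w = T.dist u x + 1} with hC
  -- the complement of C contains at least d vertices
  have hCc : d + C.ncard ≤ n := by
    have hstep : ∀ i : ℕ, i < d → ∃ x, T.dist u x = i ∧ x ∈ Cᶜ := by
      intro i hi
      obtain ⟨y, hy⟩ := hdepth (i + 1) (by omega)
      obtain ⟨w, hadj, hw⟩ := stmt12_pred T hc u y i hy
      refine ⟨w, hw, ?_⟩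
      simp only [hC, Set.mem_compl_iff, Set.mem_setOf_eq, not_not]
      exact ⟨y, hadj, by omega⟩
    have hcard : d ≤ Cᶜ.toFinset.card := by
      have := Finset.card_le_card_of_injOn
        (f := fun i => if hi : i < d then (hstep i hi).choose else Classical.arbitrary V)
        (s := Finset.range d) (t := Cᶜ.toFinset) ?_ ?_
      · simpa using this
      · intro i hi
        have hi' := Finset.mem_range.mp hi
        simp only [hi', dif_pos]
        simpa using ((hstep i hi').choose_spec).2
      · intro i hi j hj hij
        have hi' := Finset.mem_range.mp hi
        have hj' := Finset.mem_range.mp hj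
        simp only [hi', hj', dif_pos] at hij
        have h1 := ((hstep i hi').choose_spec).1
        have h2 := ((hstep j hj').choose_spec).1
        rw [hij] at h1
        omega
    have hcompl : C.ncard + Cᶜ.ncard = Nat.card V := Set.ncard_add_ncard_compl C
    have hcompl2 : Cᶜ.toFinset.card = Cᶜ.ncard := (Set.ncard_eq_toFinset_card' _).symm
    have hnn : Nat.card V = n := by rw [Nat.card_eq_fintype_card, hn]
    omega
  -- the three dominating sets
  set D : ℕ → Set V := fun j =>
    {x | T.dist u x % 3 = j} ∪ (C ∩ {x | T.dist u x % 3 = (j + 2) % 3}) ∪ {x | j = 2 ∧ x = u}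
    with hD
  have hdom : ∀ j < 3, ∀ v ∉ D j, ∃ w ∈ D j, T.Adj w v := by
    intro j hj v hv
    simp only [hD, Set.mem_union, Set.mem_inter_iff, Set.mem_setOf_eq, not_or] at hv
    obtain ⟨⟨h1, h2⟩, h3⟩ := hv
    have hdepu : T.dist u u = 0 := SimpleGraph.dist_self
    by_cases hvu : v = u
    · subst hvu
      have hj2' : j ≠ 2 := fun hh => h3 ⟨hh, rfl⟩
      have hj1 : j = 1 := by omega
      have hvC : v ∉ C := by
        intro hmem
        exact h2 ⟨hmem, by omega⟩
      simp only [hC, Set.mem_setOf_eq, not_not] at hvC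
      obtain ⟨w, hadj, hw⟩ := hvC
      refine ⟨w, Or.inl (Or.inl ?_), hadj.symm⟩
      simp only [Set.mem_setOf_eq]
      omega
    · by_cases hcase : T.dist u v % 3 = (j + 1) % 3
      · have hpos : T.dist u v ≠ 0 := by
          have := hc.pos_dist_of_ne (Ne.symm hvu)
          omega
        have hdv : T.dist u v ≠ 0 := hpos
        obtain ⟨w, hadj, hw⟩ := stmt12_pred T hc u v (T.dist u v - 1) (by omega)
        refine ⟨w, Or.inl (Or.inl ?_), hadj⟩
        simp only [Set.mem_setOf_eq]
        omega
      · have hcase2 : T.dist u v % 3 = (j + 2) % 3 := by omega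
        have hvC : v ∉ C := fun hmem => h2 ⟨hmem, hcase2⟩
        simp only [hC, Set.mem_setOf_eq, not_not] at hvC
        obtain ⟨w, hadj, hw⟩ := hvC
        refine ⟨w, Or.inl (Or.inl ?_), hadj.symm⟩
        simp only [Set.mem_setOf_eq]
        omega
  have hγle : ∀ j < 3, γ ≤ (D j).ncard := by
    intro j hj
    rw [← hγ]
    exact Nat.sInf_le ⟨D j, hdom j hj, rfl⟩
  -- cardinality bookkeeping
  set A : ℕ → Set V := fun j => {x | T.dist u x % 3 = j} with hA
  have hDle : ∀ j < 3, (D j).ncard ≤ (A j).ncard + (C ∩ A ((j + 2) % 3)).ncard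
      + (if j = 2 then 1 else 0) := by
    intro j hj
    have e1 : (D j).ncard ≤ (A j ∪ (C ∩ A ((j + 2) % 3))).ncard
        + ({x | j = 2 ∧ x = u} : Set V).ncard := by
      rw [hD]
      exact Set.ncard_union_le _ _
    have e2 : (A j ∪ (C ∩ A ((j + 2) % 3))).ncard ≤ (A j).ncard
        + (C ∩ A ((j + 2) % 3)).ncard := Set.ncard_union_le _ _
    have e3 : ({x | j = 2 ∧ x = u} : Set V).ncard ≤ (if j = 2 then 1 else 0) := by
      by_cases hj2 : j = 2
      · subst hj2
        have huu : ({x | (2:ℕ) = 2 ∧ x = u} : Set V) = {u} := by ext x; simp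
        simp [huu]
      · have huu : ({x | j = 2 ∧ x = u} : Set V) = ∅ := by ext x; simp [hj2]
        simp [huu, hj2]
    omega
  have hpart : ∀ (S : Set V), (S ∩ A 0).ncard + (S ∩ A 1).ncard + (S ∩ A 2).ncard
      = S.ncard := by
    intro S
    have hu : (S ∩ A 0) ∪ ((S ∩ A 1) ∪ (S ∩ A 2)) = S := by
      ext x; simp only [hA, Set.mem_union, Set.mem_inter_iff, Set.mem_setOf_eq]
      constructor
      · rintro (⟨hx, _⟩ | ⟨hx, _⟩ | ⟨hx, _⟩) <;> exact hx
      · intro hx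
        have hlt : T.dist u x % 3 = 0 ∨ T.dist u x % 3 = 1 ∨ T.dist u x % 3 = 2 := by omega
        rcases hlt with h | h | h
        · exact Or.inl ⟨hx, h⟩
        · exact Or.inr (Or.inl ⟨hx, h⟩)
        · exact Or.inr (Or.inr ⟨hx, h⟩)
    have d1 : Disjoint (S ∩ A 0) ((S ∩ A 1) ∪ (S ∩ A 2)) := by
      rw [Set.disjoint_left]
      rintro x ⟨_, hx0⟩ (⟨_, hx1⟩ | ⟨_, hx2⟩) <;> simp only [hA, Set.mem_setOf_eq] at * <;> omega
    have d2 : Disjoint (S ∩ A 1) (S ∩ A 2) := by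
      rw [Set.disjoint_left]
      rintro x ⟨_, hx1⟩ ⟨_, hx2⟩
      simp only [hA, Set.mem_setOf_eq] at *
      omega
    calc (S ∩ A 0).ncard + (S ∩ A 1).ncard + (S ∩ A 2).ncard
        = ((S ∩ A 0) ∪ ((S ∩ A 1) ∪ (S ∩ A 2))).ncard := by
          rw [Set.ncard_union_eq d1, Set.ncard_union_eq d2]; ring
      _ = S.ncard := by rw [hu]
  have hAn : (A 0).ncard + (A 1).ncard + (A 2).ncard = n := by
    have := hpart Set.univ
    simp only [Set.univ_inter] at this
    rw [this, Set.ncard_univ, Nat.card_eq_fintype_card, hn]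
  have hCn : (C ∩ A 0).ncard + (C ∩ A 1).ncard + (C ∩ A 2).ncard = C.ncard := hpart C
  -- combine
  have key : 3 * γ + d ≤ 2 * n + 1 := by
    have g0 := hγle 0 (by norm_num)
    have g1 := hγle 1 (by norm_num)
    have g2 := hγle 2 (by norm_num)
    have b0 := hDle 0 (by norm_num)
    have b1 := hDle 1 (by norm_num)
    have b2 := hDle 2 (by norm_num)
    norm_num at b0 b1 b2
    omega
  push_cast [← hd]
  omega
end

section
/- For integers n and gamma with 1 <= gamma < ceil(n/3), the minimum status of the dumbbell D_n(ceil((n - 3*gamma + 2)/2), floor((n - 3*gamma + 2)/2)) equals ((3*gamma - 1)/2) * (n - (3*gamma - 1)/2) if gamma is odd, and equals (3*gamma/2) * (n + 1 - 3*gamma/2) - ceil(n/2) if gamma is even. -/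
open SimpleGraph

variable {V : Type*}

set_option maxHeartbeats 1000000


/-- nat "absolute difference" -/
def nd' (x y : ℕ) : ℕ := (x - y) + (y - x)

/-- coordinate of a dumbbell vertex (shifted by 1) -/
def dcoord (m p : ℕ) (j : ℕ) : ℕ := if j < m then j + 1 else if j < m + p then 0 else m + 1



lemma int_mul_succ_nonneg (x : ℤ) : 0 ≤ x * (x + 1) := by
  rcases le_or_gt 0 x with h | h
  · exact mul_nonneg h (by linarith)
  · nlinarith

lemma db_adj_lip (n m p q : ℕ) (hm : 1 ≤ m) (hn : n = m + p + q) {a b : Fin n}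
    (h : (dumbbell n p q).Adj a b) : nd' (dcoord m p a) (dcoord m p b) ≤ 1 := by
  rw [dumbbell, SimpleGraph.fromRel_adj] at h
  obtain ⟨hne, h⟩ := h
  have ha := a.isLt
  have hb := b.isLt
  simp only [nd', dcoord]
  rcases h with (⟨h1, h2⟩ | ⟨h1, h2, h3⟩ | ⟨h1, h2⟩) | (⟨h1, h2⟩ | ⟨h1, h2, h3⟩ | ⟨h1, h2⟩) <;>
    split_ifs <;> omega

lemma db_walk_lb (n m p q : ℕ) (hm : 1 ≤ m) (hn : n = m + p + q) {u v : Fin n}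
    (W : (dumbbell n p q).Walk u v) :
    nd' (dcoord m p u) (dcoord m p v) ≤ W.length := by
  induction W with
  | nil => simp [nd']
  | cons h W ih =>
    have h1 := db_adj_lip n m p q hm hn h
    rw [SimpleGraph.Walk.length_cons]
    unfold nd' at *
    omega

lemma db_adj_path (n m p q : ℕ) (hn : n = m + p + q) {i : ℕ} (h : i + 1 < m) :
    (dumbbell n p q).Adj ⟨i, by omega⟩ ⟨i + 1, by omega⟩ := by
  rw [dumbbell, SimpleGraph.fromRel_adj]
  refine ⟨Fin.ne_of_val_ne (by simp), Or.inl (Or.inl ⟨rfl, ?_⟩)⟩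
  show i + 1 < n - p - q
  omega

lemma db_adj_pend0 (n m p q : ℕ) (hm : 1 ≤ m) (hn : n = m + p + q) {j : ℕ}
    (h1 : m ≤ j) (h2 : j < m + p) :
    (dumbbell n p q).Adj ⟨0, by omega⟩ ⟨j, by omega⟩ := by
  rw [dumbbell, SimpleGraph.fromRel_adj]
  refine ⟨Fin.ne_of_val_ne (by simp; omega), Or.inl (Or.inr (Or.inl ⟨rfl, ?_, ?_⟩))⟩
  · show n - p - q ≤ j; omega
  · show j < n - q; omega

lemma db_adj_pend1 (n m p q : ℕ) (hm : 1 ≤ m) (hn : n = m + p + q) {j : ℕ}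
    (h1 : m + p ≤ j) (h2 : j < n) :
    (dumbbell n p q).Adj ⟨m - 1, by omega⟩ ⟨j, h2⟩ := by
  rw [dumbbell, SimpleGraph.fromRel_adj]
  refine ⟨Fin.ne_of_val_ne (by simp; omega), Or.inl (Or.inr (Or.inr ⟨?_, ?_⟩))⟩
  · show m - 1 = n - p - q - 1; omega
  · show n - q ≤ j; omega

lemma db_walk_path (n m p q : ℕ) (hn : n = m + p + q) :
    ∀ (j : ℕ) (hj : j < m) (i : ℕ) (_ : i ≤ j),
    ∃ W : (dumbbell n p q).Walk ⟨i, by omega⟩ ⟨j, by omega⟩, W.length ≤ j - i := by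
  intro j
  induction j with
  | zero =>
    intro hj i hij
    have : i = 0 := by omega
    subst this
    exact ⟨SimpleGraph.Walk.nil, by simp⟩
  | succ j ih =>
    intro hj i hij
    rcases Nat.eq_or_lt_of_le hij with heq | hlt
    · subst heq
      exact ⟨SimpleGraph.Walk.nil, by simp⟩
    · obtain ⟨W, hW⟩ := ih (by omega) i (by omega)
      exact ⟨W.concat (db_adj_path n m p q hn hj),
        by rw [SimpleGraph.Walk.length_concat]; omega⟩

lemma db_reach (n m p q : ℕ) (hm : 1 ≤ m) (hn : n = m + p + q)
    (s : ℕ) (hs : s < m) (hsn : s < n) (v : Fin n) :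
    ∃ W : (dumbbell n p q).Walk ⟨s, hsn⟩ v, W.length ≤ nd' (s + 1) (dcoord m p v) := by
  have hv := v.isLt
  by_cases h1 : (v : ℕ) < m
  · have hcv : dcoord m p v = (v : ℕ) + 1 := if_pos h1
    rw [hcv]
    rcases le_or_gt s (v : ℕ) with hle | hlt
    · obtain ⟨W, hW⟩ := db_walk_path n m p q hn (v : ℕ) h1 s hle
      exact ⟨W, by unfold nd'; omega⟩
    · obtain ⟨W, hW⟩ := db_walk_path n m p q hn s hs (v : ℕ) (le_of_lt hlt)
      refine ⟨W.reverse, ?_⟩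
      rw [SimpleGraph.Walk.length_reverse]
      unfold nd'; omega
  · by_cases h2 : (v : ℕ) < m + p
    · have hcv : dcoord m p v = 0 := by unfold dcoord; rw [if_neg h1, if_pos h2]
      rw [hcv]
      obtain ⟨W, hW⟩ := db_walk_path n m p q hn s hs 0 (Nat.zero_le s)
      refine ⟨W.reverse.concat (db_adj_pend0 n m p q hm hn (by omega) h2), ?_⟩
      rw [SimpleGraph.Walk.length_concat, SimpleGraph.Walk.length_reverse]
      unfold nd'; omega
    · have hcv : dcoord m p v = m + 1 := by unfold dcoord; rw [if_neg h1, if_neg h2]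
      rw [hcv]
      obtain ⟨W, hW⟩ := db_walk_path n m p q hn (m - 1) (by omega) s (by omega)
      refine ⟨W.concat (db_adj_pend1 n m p q hm hn (by omega) hv), ?_⟩
      rw [SimpleGraph.Walk.length_concat]
      unfold nd'; omega

lemma db_dist_eq (n m p q : ℕ) (hm : 1 ≤ m) (hn : n = m + p + q)
    (s : ℕ) (hs : s < m) (hsn : s < n) (v : Fin n) :
    (dumbbell n p q).dist ⟨s, hsn⟩ v = nd' (s + 1) (dcoord m p v) := by
  obtain ⟨W, hW⟩ := db_reach n m p q hm hn s hs hsn v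
  refine le_antisymm ((SimpleGraph.dist_le W).trans hW) ?_
  obtain ⟨P, hP⟩ := SimpleGraph.Reachable.exists_walk_length_eq_dist ⟨W⟩
  have h2 := db_walk_lb n m p q hm hn P
  rw [hP] at h2
  have hc : dcoord m p ((⟨s, hsn⟩ : Fin n) : ℕ) = s + 1 := if_pos hs
  rw [hc] at h2
  exact h2

lemma db_dist_lb (n m p q : ℕ) (hm : 1 ≤ m) (hn : n = m + p + q) (u v : Fin n) :
    nd' (dcoord m p u) (dcoord m p v) ≤ (dumbbell n p q).dist u v := by
  have h0n : 0 < n := by omega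
  obtain ⟨W1, _⟩ := db_reach n m p q hm hn 0 hm h0n u
  obtain ⟨W2, _⟩ := db_reach n m p q hm hn 0 hm h0n v
  obtain ⟨P, hP⟩ := SimpleGraph.Reachable.exists_walk_length_eq_dist
    (⟨W1.reverse.append W2⟩ : (dumbbell n p q).Reachable u v)
  have h2 := db_walk_lb n m p q hm hn P
  rw [hP] at h2
  exact h2

lemma sumA' : ∀ (m u : ℕ), u ≤ m + 1 →
    2 * ((∑ j ∈ Finset.range m, nd' u (j + 1) : ℕ) : ℤ)
      = (u : ℤ) ^ 2 - u + ((m : ℤ) - u) * ((m : ℤ) + 1 - u) := by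
  intro m
  induction m with
  | zero =>
    intro u hu
    interval_cases u <;> norm_num [nd']
  | succ m ih =>
    intro u hu
    by_cases hu2 : u ≤ m + 1
    · rw [Finset.sum_range_succ]
      have h1 := ih u hu2
      have hnd : ((nd' u (m + 1) : ℕ) : ℤ) = (m : ℤ) + 1 - u := by unfold nd'; omega
      push_cast
      push_cast at h1 hnd
      linear_combination h1 + 2 * hnd
    · have hu3 : u = m + 2 := by omega
      subst hu3
      have hS : (∑ j ∈ Finset.range (m + 1), nd' (m + 2) (j + 1))
          = ∑ j ∈ Finset.range (m + 1), (j + 1) := by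
        rw [← Finset.sum_range_reflect (fun j => nd' (m + 2) (j + 1)) (m + 1)]
        refine Finset.sum_congr rfl fun j hj => ?_
        rw [Finset.mem_range] at hj
        unfold nd'; omega
      have hG : (∑ j ∈ Finset.range (m + 1), (j + 1)) * 2 = (m + 2) * (m + 1) := by
        have h2 : (∑ k ∈ Finset.range (m + 2), k)
            = ∑ j ∈ Finset.range (m + 1), (j + 1) + 0 := Finset.sum_range_succ' (fun k => k) (m + 1)
        have h3 := Finset.sum_range_id_mul_two (m + 2)
        have h4 : (m + 2) * (m + 2 - 1) = (m + 2) * (m + 1) := by norm_num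
        rw [h4] at h3
        simp only [add_zero] at h2
        rw [← h2]
        linarith [h3]
      rw [hS]
      have hGZ : ((∑ j ∈ Finset.range (m + 1), (j + 1) : ℕ) : ℤ) * 2 = ((m : ℤ) + 2) * ((m : ℤ) + 1) := by
        exact_mod_cast congrArg (Nat.cast : ℕ → ℤ) hG
      push_cast
      push_cast at hGZ
      linear_combination hGZ

lemma sumSplit (n m p q : ℕ) (hn : n = m + p + q) (u : ℕ) :
    ∑ i ∈ Finset.range n, nd' u (dcoord m p i)
      = (∑ j ∈ Finset.range m, nd' u (j + 1)) + p * u + q * nd' u (m + 1) := by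
  have h1 : m ≤ m + p := by omega
  have h2 : (0:ℕ) ≤ m := by omega
  have h3 : m + p ≤ n := by omega
  rw [Finset.range_eq_Ico, ← Finset.sum_Ico_consecutive _ (Nat.zero_le (m + p)) h3,
    ← Finset.sum_Ico_consecutive _ (Nat.zero_le m) h1]
  congr 1
  · congr 1
    · rw [← Finset.range_eq_Ico]
      refine Finset.sum_congr rfl fun j hj => ?_
      rw [Finset.mem_range] at hj
      unfold dcoord
      rw [if_pos hj]
    · have hc : ∀ i ∈ Finset.Ico m (m + p), nd' u (dcoord m p i) = u := by
        intro i hi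
        rw [Finset.mem_Ico] at hi
        unfold dcoord nd'
        rw [if_neg (by omega), if_pos (by omega)]
        omega
      rw [Finset.sum_congr rfl hc, Finset.sum_const, Nat.card_Ico, smul_eq_mul]
      congr 1
      omega
  · have hc : ∀ i ∈ Finset.Ico (m + p) n, nd' u (dcoord m p i) = nd' u (m + 1) := by
      intro i hi
      rw [Finset.mem_Ico] at hi
      unfold dcoord
      rw [if_neg (by omega), if_neg (by omega)]
    rw [Finset.sum_congr rfl hc, Finset.sum_const, Nat.card_Ico, smul_eq_mul]
    congr 1
    omega


/-- The minimum status of `D_n(⌈(n-3γ+2)/2⌉, ⌊(n-3γ+2)/2⌋)` for `1 ≤ γ < ⌈n/3⌉`. -/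
theorem stmt14 (n γ : ℕ) (h1 : 1 ≤ γ) (h2 : γ < (n + 2) / 3) :
    (Odd γ →
      minStatus (dumbbell n ((n - 3 * γ + 3) / 2) ((n - 3 * γ + 2) / 2))
        = ((3 * γ - 1) / 2) * (n - (3 * γ - 1) / 2)) ∧
    (Even γ →
      minStatus (dumbbell n ((n - 3 * γ + 3) / 2) ((n - 3 * γ + 2) / 2))
        = (3 * γ / 2) * (n + 1 - 3 * γ / 2) - (n + 1) / 2) := by
  obtain ⟨p, hpd⟩ : ∃ x, x = (n - 3 * γ + 3) / 2 := ⟨_, rfl⟩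
  obtain ⟨q, hqd⟩ : ∃ x, x = (n - 3 * γ + 2) / 2 := ⟨_, rfl⟩
  rw [← hpd, ← hqd]
  have h3 : 3 * γ + 1 ≤ n := by omega
  obtain ⟨m, hmd⟩ : ∃ x, x = 3 * γ - 2 := ⟨_, rfl⟩
  obtain ⟨s, hsd⟩ : ∃ x, x = (3 * γ - 3) / 2 := ⟨_, rfl⟩
  have hn : n = m + p + q := by omega
  have hm : 1 ≤ m := by omega
  have hs : s < m := by omega
  have hsn : s < n := by omega
  have hσ : s + 1 ≤ m + 1 := by omega
  set G := dumbbell n p q with hG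
  -- status of the candidate vertex
  have e1 : status G ⟨s, hsn⟩ = ∑ i ∈ Finset.range n, nd' (s + 1) (dcoord m p i) := by
    unfold status
    exact (Finset.sum_congr rfl fun v _ => db_dist_eq n m p q hm hn s hs hsn v).trans
      (Fin.sum_univ_eq_sum_range (fun i => nd' (s + 1) (dcoord m p i)) n)
  -- lower bound for every vertex
  have e2 : ∀ v : Fin n, (∑ i ∈ Finset.range n, nd' (dcoord m p (v : ℕ)) (dcoord m p i))
      ≤ status G v := by
    intro v
    unfold status
    rw [← Fin.sum_univ_eq_sum_range (fun i => nd' (dcoord m p (v : ℕ)) (dcoord m p i)) n]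
    exact Finset.sum_le_sum fun w _ => db_dist_lb n m p q hm hn v w
  -- closed formula
  have formula : ∀ u, u ≤ m + 1 →
      2 * ((∑ i ∈ Finset.range n, nd' u (dcoord m p i) : ℕ) : ℤ)
        = (u : ℤ) ^ 2 - u + ((m : ℤ) - u) * ((m : ℤ) + 1 - u)
          + 2 * p * u + 2 * q * ((m : ℤ) + 1 - u) := by
    intro u hu
    rw [sumSplit n m p q hn u]
    have hA := sumA' m u hu
    have hnd : ((nd' u (m + 1) : ℕ) : ℤ) = (m : ℤ) + 1 - u := by unfold nd'; omega
    push_cast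
    push_cast at hA hnd
    linear_combination hA + 2 * (q : ℤ) * hnd
  -- minimality of the candidate
  have key : ∀ u, u ≤ m + 1 →
      (∑ i ∈ Finset.range n, nd' (s + 1) (dcoord m p i))
        ≤ ∑ i ∈ Finset.range n, nd' u (dcoord m p i) := by
    intro u hu
    have f1 := formula (s + 1) hσ
    have f2 := formula u hu
    obtain ⟨δ, hδ1, hδ2⟩ : ∃ δ : ℤ, (δ = -1 ∨ δ = 0 ∨ δ = 1) ∧
        2 * ((s : ℤ) + 1) - ((m : ℤ) + 1) + ((p : ℤ) - q) = δ := ⟨_, by omega, rfl⟩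
    have hprod : 0 ≤ ((u : ℤ) - ((s : ℤ) + 1)) * (((u : ℤ) - ((s : ℤ) + 1)) + δ) := by
      rcases hδ1 with rfl | rfl | rfl
      · have h := int_mul_succ_nonneg ((u : ℤ) - ((s : ℤ) + 1) - 1)
        have he : ((u : ℤ) - ((s : ℤ) + 1)) * (((u : ℤ) - ((s : ℤ) + 1)) + (-1))
            = ((u : ℤ) - ((s : ℤ) + 1) - 1) * (((u : ℤ) - ((s : ℤ) + 1) - 1) + 1) := by ring
        rw [he]; exact h
      · have he : ((u : ℤ) - ((s : ℤ) + 1)) * (((u : ℤ) - ((s : ℤ) + 1)) + 0)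
            = ((u : ℤ) - ((s : ℤ) + 1)) * ((u : ℤ) - ((s : ℤ) + 1)) := by ring
        rw [he]; exact mul_self_nonneg _
      · exact int_mul_succ_nonneg _
    have hineq : 2 * ((∑ i ∈ Finset.range n, nd' (s + 1) (dcoord m p i) : ℕ) : ℤ)
        ≤ 2 * ((∑ i ∈ Finset.range n, nd' u (dcoord m p i) : ℕ) : ℤ) := by
      rw [f1, f2]
      have hdiff : ((u : ℤ) ^ 2 - u + ((m : ℤ) - u) * ((m : ℤ) + 1 - u)
            + 2 * p * u + 2 * q * ((m : ℤ) + 1 - u))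
          - (((s : ℤ) + 1) ^ 2 - ((s : ℤ) + 1) + ((m : ℤ) - ((s : ℤ) + 1)) * ((m : ℤ) + 1 - ((s : ℤ) + 1))
            + 2 * p * ((s : ℤ) + 1) + 2 * q * ((m : ℤ) + 1 - ((s : ℤ) + 1)))
          = 2 * (((u : ℤ) - ((s : ℤ) + 1)) * (((u : ℤ) - ((s : ℤ) + 1)) + δ)) := by
        linear_combination (2 * ((u : ℤ) - ((s : ℤ) + 1))) * hδ2
      push_cast
      push_cast at hdiff
      linarith only [hprod, hdiff]
    omega
  have hcb : ∀ v : Fin n, dcoord m p (v : ℕ) ≤ m + 1 := by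
    intro v
    unfold dcoord
    split_ifs <;> omega
  -- minStatus equals the candidate status
  have hmin : minStatus G = status G ⟨s, hsn⟩ := by
    unfold minStatus
    have hne : (Set.range (status G)).Nonempty := ⟨_, ⟨⟨s, hsn⟩, rfl⟩⟩
    refine le_antisymm (Nat.sInf_le ⟨⟨s, hsn⟩, rfl⟩) ?_
    obtain ⟨v, hv⟩ := Nat.sInf_mem hne
    rw [← hv]
    calc status G ⟨s, hsn⟩ = _ := e1
      _ ≤ _ := key (dcoord m p (v : ℕ)) (hcb v)
      _ ≤ status G v := e2 v
  rw [hmin]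
  -- now compute the value in the two parity cases
  have hNf := formula (s + 1) hσ
  rw [← e1] at hNf
  constructor
  · intro hodd
    obtain ⟨t, ht⟩ := hodd
    obtain ⟨a, had⟩ : ∃ x, x = (3 * γ - 1) / 2 := ⟨_, rfl⟩
    rw [← had]
    have ha1 : a = s + 1 := by omega
    have hm1 : m = 2 * s + 1 := by omega
    subst ha1 hm1
    have han : s + 1 ≤ n := by omega
    have hX : ((((s + 1) * (n - (s + 1)) : ℕ)) : ℤ) = ((s : ℤ) + 1) * ((n : ℤ) - ((s : ℤ) + 1)) := by
      have h' : (((n - (s + 1)) : ℕ) : ℤ) = (n : ℤ) - ((s : ℤ) + 1) := by omega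
      rw [Nat.cast_mul, h']
      push_cast
      ring
    have hnZ : (n : ℤ) = 2 * s + 1 + p + q := by exact_mod_cast congrArg (Nat.cast : ℕ → ℤ) hn
    have hval : 2 * ((status G ⟨s, hsn⟩ : ℕ) : ℤ) = 2 * (((s : ℤ) + 1) * ((n : ℤ) - ((s : ℤ) + 1))) := by
      rw [hNf]
      push_cast
      linear_combination (-(2 * ((s : ℤ) + 1))) * hnZ
    rw [← hX] at hval
    omega
  · intro heven
    obtain ⟨t, ht⟩ := heven
    obtain ⟨a, had⟩ : ∃ x, x = 3 * γ / 2 := ⟨_, rfl⟩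
    obtain ⟨hh, hhd⟩ : ∃ x, x = (n + 1) / 2 := ⟨_, rfl⟩
    rw [← had, ← hhd]
    have ha1 : a = s + 2 := by omega
    have hm1 : m = 2 * s + 2 := by omega
    subst ha1 hm1
    have han : s + 2 ≤ n + 1 := by omega
    have hhle : hh ≤ n + 1 - (s + 2) := by omega
    have hXle : hh ≤ (s + 2) * (n + 1 - (s + 2)) := le_trans hhle (Nat.le_mul_of_pos_left _ (by omega))
    have hX : ((((s + 2) * (n + 1 - (s + 2)) : ℕ)) : ℤ)
        = ((s : ℤ) + 2) * ((n : ℤ) + 1 - ((s : ℤ) + 2)) := by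
      have h' : (((n + 1 - (s + 2)) : ℕ) : ℤ) = (n : ℤ) + 1 - ((s : ℤ) + 2) := by omega
      rw [Nat.cast_mul, h']
      push_cast
      ring
    have hnZ : (n : ℤ) = 2 * s + 2 + p + q := by exact_mod_cast congrArg (Nat.cast : ℕ → ℤ) hn
    have hhZ : 2 * (hh : ℤ) = 2 * (s : ℤ) + 2 * p + 2 := by omega
    have hval : 2 * ((status G ⟨s, hsn⟩ : ℕ) : ℤ)
        = 2 * (((s : ℤ) + 2) * ((n : ℤ) + 1 - ((s : ℤ) + 2)) - hh) := by
      rw [hNf]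
      push_cast
      linear_combination (-(2 * ((s : ℤ) + 2))) * hnZ + hhZ
    rw [← hX] at hval
    omega
end

section
/- The minimum status of the tree A_{n,m} equals n + m - 2, for integers n >= 2 and 1 <= m <= floor(n/2). -/
open SimpleGraph

variable {V : Type*}

section StmtAux

attribute [local instance] Classical.propDecidable

private lemma sum_range_ind_ge' (n c : ℕ) :
    ∑ i ∈ Finset.range n, (if c ≤ i then 1 else 0) = n - c := by
  rw [← Finset.card_filter]
  have : (Finset.range n).filter (fun i => c ≤ i) = Finset.Ico c n := by
    ext i; simp [Finset.mem_Ico]; omega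
  rw [this, Nat.card_Ico]

private lemma sum_fin_ind_le_one' (n c : ℕ) :
    ∑ v : Fin n, (if (v : ℕ) = c then 1 else 0) ≤ 1 := by
  rw [Fin.sum_univ_eq_sum_range (fun i => if i = c then 1 else 0)]
  rw [Finset.sum_ite_eq' (Finset.range n) c (fun _ => 1)]
  split_ifs <;> omega

variable {n m : ℕ}

private lemma treeA_adj_iff' (a b : Fin n) :
    (treeA n m).Adj a b ↔ a ≠ b ∧
      ((((a : ℕ) = 0 ∧ 1 ≤ (b : ℕ) ∧ (b : ℕ) ≤ n - m) ∨
        (1 ≤ (a : ℕ) ∧ (a : ℕ) ≤ m - 1 ∧ (b : ℕ) = n - m + (a : ℕ))) ∨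
       (((b : ℕ) = 0 ∧ 1 ≤ (a : ℕ) ∧ (a : ℕ) ≤ n - m) ∨
        (1 ≤ (b : ℕ) ∧ (b : ℕ) ≤ m - 1 ∧ (a : ℕ) = n - m + (b : ℕ)))) := by
  simp [treeA, SimpleGraph.fromRel_adj]

variable (hn : 2 ≤ n) (hm1 : 1 ≤ m) (hm2 : 2 * m ≤ n)
include hn hm1 hm2

set_option linter.unusedSectionVars false

private lemma treeA_reach' (v : Fin n) : (treeA n m).Reachable ⟨0, by omega⟩ v := by
  set z : Fin n := ⟨0, by omega⟩ with hz
  have hzval : (z : ℕ) = 0 := rfl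
  have hvlt : (v : ℕ) < n := v.is_lt
  rcases Nat.lt_or_ge (v : ℕ) 1 with hv | hv
  · have : v = z := Fin.ext (by omega)
    rw [this]
  rcases Nat.lt_or_ge (n - m) (v : ℕ) with hv2 | hv2
  · set a : Fin n := ⟨(v : ℕ) - (n - m), by omega⟩ with ha
    have haval : (a : ℕ) = (v : ℕ) - (n - m) := rfl
    have h1 : (treeA n m).Adj z a := by
      rw [treeA_adj_iff']
      exact ⟨Fin.ne_of_val_ne (by omega), Or.inl (Or.inl ⟨hzval, by omega, by omega⟩)⟩
    have h2 : (treeA n m).Adj a v := by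
      rw [treeA_adj_iff']
      exact ⟨Fin.ne_of_val_ne (by omega), Or.inl (Or.inr ⟨by omega, by omega, by omega⟩)⟩
    exact h1.reachable.trans h2.reachable
  · have h1 : (treeA n m).Adj z v := by
      rw [treeA_adj_iff']
      exact ⟨Fin.ne_of_val_ne (by omega), Or.inl (Or.inl ⟨hzval, hv, hv2⟩)⟩
    exact h1.reachable

private lemma treeA_conn' : (treeA n m).Connected := by
  rw [SimpleGraph.connected_iff]
  exact ⟨fun u v => (treeA_reach' hn hm1 hm2 u).symm.trans (treeA_reach' hn hm1 hm2 v),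
    ⟨⟨0, by omega⟩⟩⟩

private lemma treeA_dist0' (v : Fin n) :
    (treeA n m).dist ⟨0, by omega⟩ v =
      (if 1 ≤ (v : ℕ) then 1 else 0) + (if n - m + 1 ≤ (v : ℕ) then 1 else 0) := by
  set z : Fin n := ⟨0, by omega⟩ with hz
  have hzval : (z : ℕ) = 0 := rfl
  have hvlt : (v : ℕ) < n := v.is_lt
  rcases Nat.lt_or_ge (v : ℕ) 1 with hv | hv
  · have hve : v = z := Fin.ext (by omega)
    rw [hve, SimpleGraph.dist_self, if_neg (by omega), if_neg (by omega)]
  rcases Nat.lt_or_ge (n - m) (v : ℕ) with hv2 | hv2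
  · rw [if_pos hv, if_pos (by omega)]
    set a : Fin n := ⟨(v : ℕ) - (n - m), by omega⟩ with ha
    have haval : (a : ℕ) = (v : ℕ) - (n - m) := rfl
    have h1 : (treeA n m).Adj z a := by
      rw [treeA_adj_iff']
      exact ⟨Fin.ne_of_val_ne (by omega), Or.inl (Or.inl ⟨hzval, by omega, by omega⟩)⟩
    have h2 : (treeA n m).Adj a v := by
      rw [treeA_adj_iff']
      exact ⟨Fin.ne_of_val_ne (by omega), Or.inl (Or.inr ⟨by omega, by omega, by omega⟩)⟩
    have hub : (treeA n m).dist z v ≤ 2 := by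
      calc (treeA n m).dist z v ≤ (treeA n m).dist z a + (treeA n m).dist a v :=
            (treeA_conn' hn hm1 hm2).dist_triangle
        _ ≤ 2 := by
            rw [SimpleGraph.dist_eq_one_iff_adj.mpr h1, SimpleGraph.dist_eq_one_iff_adj.mpr h2]
    have hpos : 0 < (treeA n m).dist z v :=
      (treeA_conn' hn hm1 hm2).pos_dist_of_ne (Fin.ne_of_val_ne (by omega))
    have hnot1 : (treeA n m).dist z v ≠ 1 := by
      intro h
      have hadj := SimpleGraph.dist_eq_one_iff_adj.mp h
      rw [treeA_adj_iff'] at hadj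
      rcases hadj with ⟨_, h'⟩
      rcases h' with (h' | h') <;> rcases h' with (h' | h') <;> omega
    omega
  · rw [if_pos hv, if_neg (by omega)]
    apply SimpleGraph.dist_eq_one_iff_adj.mpr
    rw [treeA_adj_iff']
    exact ⟨Fin.ne_of_val_ne (by omega), Or.inl (Or.inl ⟨hzval, hv, hv2⟩)⟩

private lemma treeA_status0' : status (treeA n m) ⟨0, by omega⟩ = n + m - 2 := by
  unfold status
  rw [Finset.sum_congr rfl (fun v _ => treeA_dist0' hn hm1 hm2 v)]
  rw [Fin.sum_univ_eq_sum_range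
    (fun i => (if 1 ≤ i then 1 else 0) + (if n - m + 1 ≤ i then 1 else 0))]
  rw [Finset.sum_add_distrib, sum_range_ind_ge', sum_range_ind_ge']
  omega

private lemma treeA_deg_le' (u : Fin n) :
    ∑ v : Fin n, (if (treeA n m).Adj u v then 1 else 0) ≤ n - m := by
  have hu : (u : ℕ) < n := u.is_lt
  rcases Nat.lt_or_ge (u : ℕ) 1 with h0 | h0
  · calc ∑ v : Fin n, (if (treeA n m).Adj u v then 1 else 0)
        ≤ ∑ v : Fin n, (if 1 ≤ (v : ℕ) ∧ (v : ℕ) ≤ n - m then 1 else 0) := by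
          apply Finset.sum_le_sum
          intro v _
          have himp : (treeA n m).Adj u v → (1 ≤ (v : ℕ) ∧ (v : ℕ) ≤ n - m) := by
            rw [treeA_adj_iff']
            rintro ⟨hne, (h | h) | (h | h)⟩ <;> omega
          by_cases ha : (treeA n m).Adj u v
          · have := himp ha
            rw [if_pos ha, if_pos this]
          · rw [if_neg ha]; exact Nat.zero_le _
      _ = n - m := by
          rw [Fin.sum_univ_eq_sum_range (fun i => if 1 ≤ i ∧ i ≤ n - m then 1 else 0)]
          rw [← Finset.card_filter]
          have he : (Finset.range n).filter (fun i => 1 ≤ i ∧ i ≤ n - m) =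
              Finset.Ico 1 (n - m + 1) := by
            ext i; simp [Finset.mem_Ico]; omega
          rw [he, Nat.card_Ico]
          omega
  rcases Nat.lt_or_ge ((m : ℕ) - 1) (u : ℕ) with h1 | h1
  · rcases Nat.lt_or_ge (n - m) (u : ℕ) with h2 | h2
    · have hb : ∑ v : Fin n, (if (treeA n m).Adj u v then 1 else 0)
          ≤ ∑ v : Fin n, (if (v : ℕ) = (u : ℕ) - (n - m) then 1 else 0) := by
        apply Finset.sum_le_sum
        intro v _
        have himp : (treeA n m).Adj u v → (v : ℕ) = (u : ℕ) - (n - m) := by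
          rw [treeA_adj_iff']
          rintro ⟨hne, (h | h) | (h | h)⟩ <;> omega
        by_cases ha : (treeA n m).Adj u v
        · rw [if_pos ha, if_pos (himp ha)]
        · rw [if_neg ha]; exact Nat.zero_le _
      have := sum_fin_ind_le_one' n ((u : ℕ) - (n - m))
      omega
    · have hb : ∑ v : Fin n, (if (treeA n m).Adj u v then 1 else 0)
          ≤ ∑ v : Fin n, (if (v : ℕ) = 0 then 1 else 0) := by
        apply Finset.sum_le_sum
        intro v _
        have himp : (treeA n m).Adj u v → (v : ℕ) = 0 := by
          rw [treeA_adj_iff']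
          rintro ⟨hne, (h | h) | (h | h)⟩ <;> omega
        by_cases ha : (treeA n m).Adj u v
        · rw [if_pos ha, if_pos (himp ha)]
        · rw [if_neg ha]; exact Nat.zero_le _
      have := sum_fin_ind_le_one' n 0
      omega
  · have hb : ∑ v : Fin n, (if (treeA n m).Adj u v then 1 else 0)
        ≤ ∑ v : Fin n, ((if (v : ℕ) = 0 then 1 else 0) +
            (if (v : ℕ) = n - m + (u : ℕ) then 1 else 0)) := by
      apply Finset.sum_le_sum
      intro v _
      have himp : (treeA n m).Adj u v → ((v : ℕ) = 0 ∨ (v : ℕ) = n - m + (u : ℕ)) := by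
        rw [treeA_adj_iff']
        rintro ⟨hne, (h | h) | (h | h)⟩ <;> omega
      by_cases ha : (treeA n m).Adj u v
      · have := himp ha
        rw [if_pos ha]
        split_ifs <;> omega
      · rw [if_neg ha]; exact Nat.zero_le _
    rw [Finset.sum_add_distrib] at hb
    have hc := sum_fin_ind_le_one' n 0
    have hd := sum_fin_ind_le_one' n (n - m + (u : ℕ))
    omega

private lemma treeA_status_lb' (u : Fin n) : n + m - 2 ≤ status (treeA n m) u := by
  have key : ∀ v : Fin n, 2 ≤ (treeA n m).dist u v +
      ((if (treeA n m).Adj u v then 1 else 0) + (if v = u then 2 else 0)) := by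
    intro v
    by_cases hvu : v = u
    · rw [hvu, SimpleGraph.dist_self, if_pos rfl]
      omega
    by_cases hadj : (treeA n m).Adj u v
    · rw [SimpleGraph.dist_eq_one_iff_adj.mpr hadj, if_pos hadj, if_neg hvu]
    · rw [if_neg hadj, if_neg hvu]
      have hpos : 0 < (treeA n m).dist u v :=
        (treeA_conn' hn hm1 hm2).pos_dist_of_ne (fun h => hvu h.symm)
      have hnot1 : (treeA n m).dist u v ≠ 1 := fun h =>
        hadj (SimpleGraph.dist_eq_one_iff_adj.mp h)
      omega
  have hsum : 2 * n ≤ (∑ v : Fin n, (treeA n m).dist u v) +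
      ((∑ v : Fin n, (if (treeA n m).Adj u v then 1 else 0)) +
       (∑ v : Fin n, (if v = u then 2 else 0))) := by
    rw [← Finset.sum_add_distrib, ← Finset.sum_add_distrib]
    have h2n : (∑ _v : Fin n, 2) = 2 * n := by
      rw [Finset.sum_const, Finset.card_univ, Fintype.card_fin, smul_eq_mul]
      ring
    rw [← h2n]
    exact Finset.sum_le_sum (fun v _ => key v)
  have h2 : (∑ v : Fin n, (if v = u then 2 else 0)) = 2 := by
    rw [Finset.sum_ite_eq' Finset.univ u (fun _ => 2)]
    simp
  have hdeg := treeA_deg_le' hn hm1 hm2 u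
  unfold status
  omega

end StmtAux

/-- The minimum status of `A_{n,m}` equals `n + m - 2`. -/
theorem stmt16 (n m : ℕ) (hn : 2 ≤ n) (hm1 : 1 ≤ m) (hm2 : 2 * m ≤ n) :
    minStatus (treeA n m) = n + m - 2 := by
  have hne : Nonempty (Fin n) := ⟨⟨0, by omega⟩⟩
  apply le_antisymm
  · exact Nat.sInf_le ⟨⟨0, by omega⟩, treeA_status0' hn hm1 hm2⟩
  · exact le_csInf (Set.range_nonempty _)
      (by rintro x ⟨u, rfl⟩; exact treeA_status_lb' hn hm1 hm2 u)
end

section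
/- Let G be a connected graph on n vertices with domination number gamma, where 1 <= gamma < ceil(n/3). Then s(G) <= ((3*gamma - 1)/2) * (n - (3*gamma - 1)/2) if gamma is odd, and s(G) <= (3*gamma/2) * (n + 1 - 3*gamma/2) - ceil(n/2) if gamma is even. -/
open SimpleGraph

variable {V : Type*}

section DSAux

open Finset


section Tools

variable {W : Type*} {Γ : SimpleGraph W}

lemma ds_adj_dist_le {a b : W} (h : Γ.Adj a b) : Γ.dist a b ≤ 1 := by
  have := SimpleGraph.dist_le (SimpleGraph.Walk.cons h SimpleGraph.Walk.nil)
  simpa using this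

lemma ds_lip (hc : Γ.Connected) (u : W) {x y : W} (h : Γ.Adj x y) :
    Γ.dist u y ≤ Γ.dist u x + 1 := by
  have h1 := hc.dist_triangle (u := u) (v := x) (w := y)
  have h2 := ds_adj_dist_le h
  omega

lemma ds_getVert_left (hc : Γ.Connected) {a b : W} (p : Γ.Walk a b) (i : ℕ) :
    Γ.dist a (p.getVert i) ≤ i := by
  induction i with
  | zero => simp [SimpleGraph.dist_self]
  | succ i ih =>
    rcases lt_or_ge i p.length with hi | hi
    · have := ds_lip hc a (p.adj_getVert_succ hi)
      omega
    · rw [p.getVert_of_length_le (by omega : p.length ≤ i + 1)]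
      have := SimpleGraph.dist_le p
      omega

lemma ds_getVert_right (hc : Γ.Connected) {a b : W} (p : Γ.Walk a b) (i : ℕ) :
    Γ.dist (p.getVert i) b ≤ p.length - i := by
  rcases le_or_gt i p.length with hi | hi
  · have h1 := ds_getVert_left hc p.reverse (p.length - i)
    rw [SimpleGraph.Walk.getVert_reverse] at h1
    have h2 : p.length - (p.length - i) = i := by omega
    rw [h2] at h1
    rw [SimpleGraph.dist_comm]
    exact h1
  · rw [p.getVert_of_length_le (le_of_lt hi)]
    simp [SimpleGraph.dist_self]

lemma ds_walk_ivt {f : W → ℕ} (hf : ∀ x y : W, Γ.Adj x y → f y ≤ f x + 1) {a b : W}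
    (p : Γ.Walk a b) {i : ℕ} (h1 : f a ≤ i) (h2 : i ≤ f b) :
    ∃ t, t ≤ p.length ∧ f (p.getVert t) = i := by
  revert h1 h2
  induction p with
  | nil =>
    intro h1 h2
    refine ⟨0, le_refl 0, ?_⟩
    simp only [SimpleGraph.Walk.getVert_zero]
    omega
  | @cons x y c h q ih =>
    intro h1 h2
    rcases eq_or_lt_of_le h1 with he | hlt
    · refine ⟨0, Nat.zero_le _, ?_⟩
      simp only [SimpleGraph.Walk.getVert_zero]
      omega
    · have hy : f y ≤ i := by have := hf x y h; omega
      obtain ⟨t, ht1, ht2⟩ := ih hy h2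
      refine ⟨t + 1, ?_, ?_⟩
      · rw [SimpleGraph.Walk.length_cons]; omega
      · rwa [SimpleGraph.Walk.getVert_cons_succ]

/-- On a geodesic from `u` to `x`, there is a vertex at each distance `i ≤ dist u x`,
and it is within `dist u x - i` of `x`. -/
lemma ds_exists_dist_eq (hc : Γ.Connected) {u x : W} {i : ℕ} (hi : i ≤ Γ.dist u x) :
    ∃ w, Γ.dist u w = i ∧ Γ.dist w x + i ≤ Γ.dist u x := by
  obtain ⟨p, hp⟩ := (hc.preconnected u x).exists_walk_length_eq_dist
  have h1 : Γ.dist u u ≤ i := by simp [SimpleGraph.dist_self]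
  obtain ⟨t, ht, hft⟩ := ds_walk_ivt (f := fun v => Γ.dist u v)
    (fun x y h => ds_lip hc u h) p h1 hi
  refine ⟨p.getVert t, hft, ?_⟩
  have hr := ds_getVert_right hc p t
  have hl := ds_getVert_left hc p t
  omega

/-- Pair version: vertex at each pair-distance level `i`, close to `x`. -/
lemma ds_exists_pdist_eq (hc : Γ.Connected) {u₀ u₁ x : W} {i : ℕ}
    (hi : i ≤ min (Γ.dist u₀ x) (Γ.dist u₁ x)) :
    ∃ w, min (Γ.dist u₀ w) (Γ.dist u₁ w) = i ∧
      Γ.dist w x + i ≤ min (Γ.dist u₀ x) (Γ.dist u₁ x) := by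
  have lip : ∀ x y : W, Γ.Adj x y →
      min (Γ.dist u₀ y) (Γ.dist u₁ y) ≤ min (Γ.dist u₀ x) (Γ.dist u₁ x) + 1 := by
    intro x y h
    have h0 := ds_lip hc u₀ h
    have h1 := ds_lip hc u₁ h
    omega
  rcases le_total (Γ.dist u₀ x) (Γ.dist u₁ x) with hle | hle
  · obtain ⟨p, hp⟩ := (hc.preconnected u₀ x).exists_walk_length_eq_dist
    have h1 : min (Γ.dist u₀ u₀) (Γ.dist u₁ u₀) ≤ i := by
      simp [SimpleGraph.dist_self]
    have h2 : i ≤ min (Γ.dist u₀ x) (Γ.dist u₁ x) := hi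
    obtain ⟨t, ht, hft⟩ := ds_walk_ivt (f := fun v => min (Γ.dist u₀ v) (Γ.dist u₁ v)) lip p h1 h2
    refine ⟨p.getVert t, hft, ?_⟩
    have hr := ds_getVert_right hc p t
    have hl := ds_getVert_left hc p t
    omega
  · obtain ⟨p, hp⟩ := (hc.preconnected u₁ x).exists_walk_length_eq_dist
    have h1 : min (Γ.dist u₀ u₁) (Γ.dist u₁ u₁) ≤ i := by
      simp [SimpleGraph.dist_self]
    obtain ⟨t, ht, hft⟩ := ds_walk_ivt (f := fun v => min (Γ.dist u₀ v) (Γ.dist u₁ v)) lip p h1 hi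
    refine ⟨p.getVert t, hft, ?_⟩
    have hr := ds_getVert_right hc p t
    have hl := ds_getVert_left hc p t
    omega

end Tools

section Ecc

variable {W : Type*} [Fintype W] (Γ : SimpleGraph W)

/-- Eccentricity. -/
noncomputable def ds_ecc (u : W) : ℕ := Finset.univ.sup (Γ.dist u)

/-- Pair eccentricity. -/
noncomputable def ds_pecc (u₀ u₁ : W) : ℕ :=
  Finset.univ.sup (fun v => min (Γ.dist u₀ v) (Γ.dist u₁ v))

variable {Γ}

lemma ds_dist_le_ecc (u v : W) : Γ.dist u v ≤ ds_ecc Γ u :=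
  Finset.le_sup (Finset.mem_univ v)

lemma ds_ecc_le {u : W} {B : ℕ} (h : ∀ v, Γ.dist u v ≤ B) : ds_ecc Γ u ≤ B :=
  Finset.sup_le fun v _ => h v

lemma ds_pdist_le_pecc (u₀ u₁ v : W) :
    min (Γ.dist u₀ v) (Γ.dist u₁ v) ≤ ds_pecc Γ u₀ u₁ :=
  Finset.le_sup (f := fun v => min (Γ.dist u₀ v) (Γ.dist u₁ v)) (Finset.mem_univ v)

lemma ds_pecc_le {u₀ u₁ : W} {B : ℕ} (h : ∀ v, min (Γ.dist u₀ v) (Γ.dist u₁ v) ≤ B) :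
    ds_pecc Γ u₀ u₁ ≤ B :=
  Finset.sup_le fun v _ => h v

lemma ds_exists_ecc [Nonempty W] (u : W) : ∃ x, Γ.dist u x = ds_ecc Γ u := by
  obtain ⟨x, _, hx⟩ := Finset.exists_mem_eq_sup Finset.univ Finset.univ_nonempty (Γ.dist u)
  exact ⟨x, hx.symm⟩

lemma ds_exists_pecc [Nonempty W] (u₀ u₁ : W) :
    ∃ x, min (Γ.dist u₀ x) (Γ.dist u₁ x) = ds_pecc Γ u₀ u₁ := by
  obtain ⟨x, _, hx⟩ := Finset.exists_mem_eq_sup Finset.univ Finset.univ_nonempty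
    (fun v => min (Γ.dist u₀ v) (Γ.dist u₁ v))
  exact ⟨x, hx.symm⟩

open Classical in
/-- Doubling: all intermediate levels of an eccentricity minimizer have ≥ 2 vertices. -/
lemma ds_doubling_single (hc : Γ.Connected) {u : W}
    (hmin : ∀ w : W, ds_ecc Γ u ≤ ds_ecc Γ w) {i : ℕ} (h1 : 1 ≤ i) (h2 : i < ds_ecc Γ u) :
    2 ≤ (Finset.univ.filter (fun v => Γ.dist u v = i)).card := by
  haveI : Nonempty W := hc.nonempty
  by_contra hcon
  push_neg at hcon
  -- the level is nonempty
  obtain ⟨x, hx⟩ := ds_exists_ecc (Γ := Γ) u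
  obtain ⟨z, hz, _⟩ := ds_exists_dist_eq hc (show i ≤ Γ.dist u x by omega)
  have huniq : ∀ v, Γ.dist u v = i → v = z := by
    intro v hv
    by_contra hne
    have : 1 < (Finset.univ.filter (fun v => Γ.dist u v = i)).card :=
      Finset.one_lt_card.2 ⟨v, by simp [hv], z, by simp [hz], hne⟩
    omega
  -- step one vertex towards z
  obtain ⟨q, hq, hqz⟩ := ds_exists_dist_eq hc (show 1 ≤ Γ.dist u z by omega)
  rw [hz] at hqz
  have hkey : ∀ v, Γ.dist q v + 1 ≤ ds_ecc Γ u := by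
    intro v
    have hvle : Γ.dist u v ≤ ds_ecc Γ u := ds_dist_le_ecc u v
    rcases lt_trichotomy (Γ.dist u v) i with hj | hj | hj
    · have t1 := hc.dist_triangle (u := q) (v := u) (w := v)
      have t2 : Γ.dist q u = 1 := by rw [SimpleGraph.dist_comm]; exact hq
      omega
    · rw [huniq v hj]
      omega
    · obtain ⟨w, hw, hwv⟩ := ds_exists_dist_eq hc (le_of_lt hj)
      rw [huniq w hw] at hwv
      have t1 := hc.dist_triangle (u := q) (v := z) (w := v)
      omega
  have : ds_ecc Γ q + 1 ≤ ds_ecc Γ u := by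
    have h := ds_exists_ecc (Γ := Γ) q
    obtain ⟨y, hy⟩ := h
    have := hkey y
    omega
  have := hmin q
  omega

open Classical in
/-- Pair doubling: all intermediate pair-levels of a pair-eccentricity minimizing edge
have ≥ 2 vertices. -/
lemma ds_doubling_pair (hc : Γ.Connected) {u₀ u₁ : W} (hadj : Γ.Adj u₀ u₁)
    (hmin : ∀ w₀ w₁ : W, Γ.Adj w₀ w₁ → ds_pecc Γ u₀ u₁ ≤ ds_pecc Γ w₀ w₁)
    {i : ℕ} (h1 : 1 ≤ i) (h2 : i < ds_pecc Γ u₀ u₁) :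
    2 ≤ (Finset.univ.filter (fun v => min (Γ.dist u₀ v) (Γ.dist u₁ v) = i)).card := by
  haveI : Nonempty W := hc.nonempty
  by_contra hcon
  push_neg at hcon
  obtain ⟨x, hx⟩ := ds_exists_pecc (Γ := Γ) u₀ u₁
  obtain ⟨z, hz, _⟩ := ds_exists_pdist_eq hc (show i ≤ min (Γ.dist u₀ x) (Γ.dist u₁ x) by omega)
  have huniq : ∀ v, min (Γ.dist u₀ v) (Γ.dist u₁ v) = i → v = z := by
    intro v hv
    by_contra hne
    have : 1 < (Finset.univ.filter (fun v => min (Γ.dist u₀ v) (Γ.dist u₁ v) = i)).card :=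
      Finset.one_lt_card.2 ⟨v, by simp [hv], z, by simp [hz], hne⟩
    omega
  -- let a ∈ {u₀,u₁} be the closer one to z
  obtain ⟨a, ha, haz⟩ : ∃ a, (a = u₀ ∨ a = u₁) ∧ Γ.dist a z = i := by
    rcases le_total (Γ.dist u₀ z) (Γ.dist u₁ z) with h | h
    · exact ⟨u₀, Or.inl rfl, by omega⟩
    · exact ⟨u₁, Or.inr rfl, by omega⟩
  -- the geodesic a → z, second vertex q with Adj a q
  obtain ⟨p, hp⟩ := (hc.preconnected a z).exists_walk_length_eq_dist
  have hplen : 1 ≤ p.length := by omega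
  set q := p.getVert 1 with hqdef
  have hadj_aq : Γ.Adj a q := by
    have := p.adj_getVert_succ (by omega : 0 < p.length)
    rw [hqdef]
    simpa using this
  have hqz : Γ.dist q z + 1 ≤ i := by
    have h5 : Γ.dist q z ≤ p.length - 1 := by rw [hqdef]; exact ds_getVert_right hc p 1
    omega
  have hdistpair : Γ.dist u₀ u₁ ≤ 1 := ds_adj_dist_le hadj
  have hkey : ∀ v, min (Γ.dist a v) (Γ.dist q v) + 1 ≤ ds_pecc Γ u₀ u₁ := by
    intro v
    have hvle := ds_pdist_le_pecc (Γ := Γ) u₀ u₁ v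
    rcases lt_trichotomy (min (Γ.dist u₀ v) (Γ.dist u₁ v)) i with hj | hj | hj
    · -- close vertices: use a
      have t0 := hc.dist_triangle (u := a) (v := u₀) (w := v)
      have t1 := hc.dist_triangle (u := a) (v := u₁) (w := v)
      have hau0 : Γ.dist a u₀ ≤ 1 := by
        rcases ha with h | h <;> subst h
        · simp [SimpleGraph.dist_self]
        · rw [SimpleGraph.dist_comm]; exact hdistpair
      have hau1 : Γ.dist a u₁ ≤ 1 := by
        rcases ha with h | h <;> subst h
        · exact hdistpair
        · simp [SimpleGraph.dist_self]
      omega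
    · rw [huniq v hj]
      omega
    · obtain ⟨w, hw, hwv⟩ := ds_exists_pdist_eq hc (le_of_lt hj)
      rw [huniq w hw] at hwv
      have t1 := hc.dist_triangle (u := q) (v := z) (w := v)
      omega
  have hlt : ds_pecc Γ a q + 1 ≤ ds_pecc Γ u₀ u₁ := by
    obtain ⟨y, hy⟩ := ds_exists_pecc (Γ := Γ) a q
    have := hkey y
    omega
  have := hmin a q hadj_aq
  omega

end Ecc
section Sums

variable {W : Type*} [Fintype W]

open Classical in
/-- Partition sums by levels of `d`. -/
lemma ds_level_partition (d : W → ℕ) (e : ℕ) (hle : ∀ v, d v ≤ e) (f : W → ℕ) :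
    ∑ v, f v = ∑ i ∈ Finset.range (e + 1), ∑ v ∈ Finset.univ.filter (fun v => d v = i), f v := by
  have hU : (Finset.range (e + 1)).biUnion
      (fun i => Finset.univ.filter (fun v => d v = i)) = Finset.univ := by
    refine Finset.eq_univ_of_forall fun v => ?_
    simp only [Finset.mem_biUnion, Finset.mem_range, Finset.mem_filter, Finset.mem_univ,
      true_and]
    exact ⟨d v, by have := hle v; omega, rfl⟩
  conv_lhs => rw [← hU]
  rw [Finset.sum_biUnion]
  intro i _ j _ hij
  simp only [Function.onFun]
  rw [Finset.disjoint_left]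
  intro v hv1 hv2
  simp only [Finset.mem_filter] at hv1 hv2
  exact hij (hv1.2 ▸ hv2.2)

open Classical in
lemma ds_level_card (d : W → ℕ) (e : ℕ) (hle : ∀ v, d v ≤ e) :
    Fintype.card W =
      ∑ i ∈ Finset.range (e + 1), (Finset.univ.filter (fun v => d v = i)).card := by
  have := ds_level_partition d e hle (fun _ => 1)
  simpa [Finset.card_univ] using this

open Classical in
lemma ds_level_sum (d : W → ℕ) (e : ℕ) (hle : ∀ v, d v ≤ e) :
    ∑ v, (e - d v) =
      ∑ i ∈ Finset.range (e + 1), (e - i) * (Finset.univ.filter (fun v => d v = i)).card := by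
  rw [ds_level_partition d e hle (fun v => e - d v)]
  refine Finset.sum_congr rfl fun i _ => ?_
  rw [Finset.sum_congr rfl (fun v hv => ?_), Finset.sum_const, smul_eq_mul, mul_comm]
  simp only [Finset.mem_filter] at hv
  rw [hv.2]

/-- Σ_{i<n} (n-1-i) * 2 = n*(n-1). -/
lemma ds_gauss (n : ℕ) : ∑ i ∈ Finset.range n, (n - 1 - i) * 2 = n * (n - 1) := by
  have h1 : ∑ i ∈ Finset.range n, (n - 1 - i) = ∑ i ∈ Finset.range n, i :=
    Finset.sum_range_reflect (fun i => i) n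
  calc ∑ i ∈ Finset.range n, (n - 1 - i) * 2 = (∑ i ∈ Finset.range n, (n - 1 - i)) * 2 := by
        rw [Finset.sum_mul]
    _ = (∑ i ∈ Finset.range n, i) * 2 := by rw [h1]
    _ = n * (n - 1) := Finset.sum_range_id_mul_two n

open Classical in
/-- Single-root status bound from doubling. -/
lemma ds_sum_single (d : W → ℕ) (e : ℕ) (hle : ∀ v, d v ≤ e)
    (h0 : 1 ≤ (Finset.univ.filter (fun v => d v = 0)).card)
    (hdb : ∀ i, 1 ≤ i → i < e → 2 ≤ (Finset.univ.filter (fun v => d v = i)).card) :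
    (∑ v, d v) + e * e ≤ e * Fintype.card W := by
  have hsum := ds_level_sum d e hle
  have hlow : e * 1 + (∑ i ∈ Finset.range e, (e - 1 - i) * 2) ≤
      ∑ i ∈ Finset.range (e + 1), (e - i) * (Finset.univ.filter (fun v => d v = i)).card := by
    rw [Finset.sum_range_succ'
      (fun i => (e - i) * (Finset.univ.filter (fun v => d v = i)).card) e]
    have hA : ∑ i ∈ Finset.range e, (e - 1 - i) * 2 ≤
        ∑ i ∈ Finset.range e,
          (e - (i + 1)) * (Finset.univ.filter (fun v => d v = i + 1)).card := by
      refine Finset.sum_le_sum fun i hi => ?_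
      simp only [Finset.mem_range] at hi
      rcases eq_or_lt_of_le (Nat.succ_le_of_lt hi) with hie | hie
      · have h2 : e - 1 - i = 0 := by omega
        have h3 : e - (i + 1) = 0 := by omega
        rw [h2, h3]
        simp
      · have h2 := hdb (i + 1) (by omega) (by omega)
        have h3 : e - 1 - i = e - (i + 1) := by omega
        rw [h3]
        exact Nat.mul_le_mul_left _ h2
    have hB : e * 1 ≤ (e - 0) * (Finset.univ.filter (fun v => d v = 0)).card := by
      simpa using Nat.mul_le_mul_left e h0
    omega
  have hgauss := ds_gauss e
  have htot : (∑ v, d v) + (∑ v, (e - d v)) = e * Fintype.card W := by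
    rw [← Finset.sum_add_distrib]
    have hpt : ∀ v : W, d v + (e - d v) = e := fun v => by have := hle v; omega
    rw [Finset.sum_congr rfl (fun v _ => hpt v), Finset.sum_const, Finset.card_univ,
      smul_eq_mul, mul_comm]
  have hee : e * 1 + e * (e - 1) = e * e := by
    cases e with
    | zero => simp
    | succ k => simp only [Nat.succ_sub_one]; ring
  omega

open Classical in
/-- Pair status bound from doubling. -/
lemma ds_sum_pair (d : W → ℕ) (e : ℕ) (hle : ∀ v, d v ≤ e)
    (h0 : 2 ≤ (Finset.univ.filter (fun v => d v = 0)).card)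
    (hdb : ∀ i, 1 ≤ i → i < e → 2 ≤ (Finset.univ.filter (fun v => d v = i)).card) :
    (∑ v, d v) + e * (e + 1) ≤ e * Fintype.card W := by
  have hsum := ds_level_sum d e hle
  have hlow : ∑ i ∈ Finset.range (e + 1), (e - i) * 2 ≤
      ∑ i ∈ Finset.range (e + 1), (e - i) * (Finset.univ.filter (fun v => d v = i)).card := by
    refine Finset.sum_le_sum fun i hi => ?_
    simp only [Finset.mem_range] at hi
    rcases Nat.eq_zero_or_pos i with hi0 | hi0
    · subst hi0
      exact Nat.mul_le_mul_left _ h0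
    · rcases lt_or_ge i e with hie | hie
      · exact Nat.mul_le_mul_left _ (hdb i hi0 hie)
      · have h2 : e - i = 0 := by omega
        rw [h2]
        simp
  have hgauss2 : ∑ i ∈ Finset.range (e + 1), (e - i) * 2 = e * (e + 1) := by
    have hg := ds_gauss (e + 1)
    have hr : ∀ i ∈ Finset.range (e + 1), (e - i) * 2 = (e + 1 - 1 - i) * 2 := by
      intro i _
      omega
    rw [Finset.sum_congr rfl hr, hg]
    have h9 : e + 1 - 1 = e := rfl
    rw [h9]
    ring
  have htot : (∑ v, d v) + (∑ v, (e - d v)) = e * Fintype.card W := by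
    rw [← Finset.sum_add_distrib]
    have hpt : ∀ v : W, d v + (e - d v) = e := fun v => by have := hle v; omega
    rw [Finset.sum_congr rfl (fun v _ => hpt v), Finset.sum_const, Finset.card_univ,
      smul_eq_mul, mul_comm]
  omega

open Classical in
/-- Cardinality bound for single version: `2e ≤ |W|`. -/
lemma ds_card_single (d : W → ℕ) (e : ℕ) (hle : ∀ v, d v ≤ e)
    (h0 : 1 ≤ (Finset.univ.filter (fun v => d v = 0)).card)
    (htop : 1 ≤ (Finset.univ.filter (fun v => d v = e)).card)
    (hdb : ∀ i, 1 ≤ i → i < e → 2 ≤ (Finset.univ.filter (fun v => d v = i)).card) :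
    2 * e ≤ Fintype.card W := by
  rcases Nat.eq_zero_or_pos e with he | he
  · subst he
    have h1 := Finset.card_filter_le (Finset.univ : Finset W) (fun v => d v = 0)
    rw [Finset.card_univ] at h1
    omega
  have hcard := ds_level_card d e hle
  have hsplit : ∑ i ∈ Finset.range (e + 1), (Finset.univ.filter (fun v => d v = i)).card
      = (∑ i ∈ Finset.range (e - 1), (Finset.univ.filter (fun v => d v = i + 1)).card)
        + (Finset.univ.filter (fun v => d v = 0)).card
        + (Finset.univ.filter (fun v => d v = e)).card := by
    rw [Finset.sum_range_succ]
    congr 1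
    have h4 : e = (e - 1) + 1 := by omega
    rw [h4, Finset.sum_range_succ' (fun i => (Finset.univ.filter (fun v => d v = i)).card)
      (e - 1)]
    congr 2 <;> omega
  have hmid : 2 * (e - 1) ≤
      ∑ i ∈ Finset.range (e - 1), (Finset.univ.filter (fun v => d v = i + 1)).card := by
    have := Finset.card_nsmul_le_sum (Finset.range (e - 1))
      (fun i => (Finset.univ.filter (fun v => d v = i + 1)).card) 2
      (fun i hi => by
        simp only [Finset.mem_range] at hi
        exact hdb (i + 1) (by omega) (by omega))
    simpa [mul_comm] using this
  omega

open Classical in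
/-- Cardinality bound for the pair version: `2e + 1 ≤ |W|`. -/
lemma ds_card_pair (d : W → ℕ) (e : ℕ) (hle : ∀ v, d v ≤ e)
    (h0 : 2 ≤ (Finset.univ.filter (fun v => d v = 0)).card)
    (htop : 1 ≤ (Finset.univ.filter (fun v => d v = e)).card)
    (hdb : ∀ i, 1 ≤ i → i < e → 2 ≤ (Finset.univ.filter (fun v => d v = i)).card) :
    2 * e + 1 ≤ Fintype.card W := by
  rcases Nat.eq_zero_or_pos e with he | he
  · subst he
    have h1 := Finset.card_filter_le (Finset.univ : Finset W) (fun v => d v = 0)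
    rw [Finset.card_univ] at h1
    omega
  have hcard := ds_level_card d e hle
  have hsplit : ∑ i ∈ Finset.range (e + 1), (Finset.univ.filter (fun v => d v = i)).card
      = (∑ i ∈ Finset.range (e - 1), (Finset.univ.filter (fun v => d v = i + 1)).card)
        + (Finset.univ.filter (fun v => d v = 0)).card
        + (Finset.univ.filter (fun v => d v = e)).card := by
    rw [Finset.sum_range_succ]
    congr 1
    have h4 : e = (e - 1) + 1 := by omega
    rw [h4, Finset.sum_range_succ' (fun i => (Finset.univ.filter (fun v => d v = i)).card)
      (e - 1)]
    congr 2 <;> omega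
  have hmid : 2 * (e - 1) ≤
      ∑ i ∈ Finset.range (e - 1), (Finset.univ.filter (fun v => d v = i + 1)).card := by
    have := Finset.card_nsmul_le_sum (Finset.range (e - 1))
      (fun i => (Finset.univ.filter (fun v => d v = i + 1)).card) 2
      (fun i hi => by
        simp only [Finset.mem_range] at hi
        exact hdb (i + 1) (by omega) (by omega))
    simpa [mul_comm] using this
  omega

end Sums
section Packages

variable {W : Type*} [Fintype W] {Γ : SimpleGraph W}

open Classical in
/-- The center bundle: an eccentricity minimizer with status & cardinality bounds. -/
lemma ds_single_package (hc : Γ.Connected) :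
    ∃ u : W, (∀ w : W, ds_ecc Γ u ≤ ds_ecc Γ w) ∧
      (∑ v, Γ.dist u v) + ds_ecc Γ u * ds_ecc Γ u ≤ ds_ecc Γ u * Fintype.card W ∧
      2 * ds_ecc Γ u ≤ Fintype.card W := by
  haveI : Nonempty W := hc.nonempty
  obtain ⟨u, _, hmin'⟩ := Finset.exists_min_image Finset.univ (ds_ecc Γ) Finset.univ_nonempty
  have hmin : ∀ w : W, ds_ecc Γ u ≤ ds_ecc Γ w := fun w => hmin' w (Finset.mem_univ w)
  have hle : ∀ v, Γ.dist u v ≤ ds_ecc Γ u := fun v => ds_dist_le_ecc u v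
  have h0 : 1 ≤ (Finset.univ.filter (fun v => Γ.dist u v = 0)).card := by
    refine Finset.card_pos.2 ⟨u, ?_⟩
    simp [SimpleGraph.dist_self]
  have htop : 1 ≤ (Finset.univ.filter (fun v => Γ.dist u v = ds_ecc Γ u)).card := by
    obtain ⟨x, hx⟩ := ds_exists_ecc (Γ := Γ) u
    refine Finset.card_pos.2 ⟨x, ?_⟩
    simp [hx]
  have hdb := fun i h1 h2 => ds_doubling_single hc hmin (i := i) h1 h2
  exact ⟨u, hmin,
    ds_sum_single (fun v => Γ.dist u v) (ds_ecc Γ u) hle h0 hdb,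
    ds_card_single (fun v => Γ.dist u v) (ds_ecc Γ u) hle h0 htop hdb⟩

lemma ds_exists_edge (hc : Γ.Connected) (h2 : 2 ≤ Fintype.card W) :
    ∃ a b : W, Γ.Adj a b := by
  obtain ⟨a, b, hne⟩ := Fintype.exists_pair_of_one_lt_card (by omega : 1 < Fintype.card W)
  obtain ⟨p⟩ := hc.preconnected a b
  cases p with
  | nil => exact absurd rfl hne
  | cons h q => exact ⟨_, _, h⟩

open Classical in
/-- The pair-center bundle. -/
lemma ds_pair_package (hc : Γ.Connected) (h2 : 2 ≤ Fintype.card W) :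
    ∃ u₀ u₁ : W, Γ.Adj u₀ u₁ ∧
      (∀ w₀ w₁ : W, Γ.Adj w₀ w₁ → ds_pecc Γ u₀ u₁ ≤ ds_pecc Γ w₀ w₁) ∧
      (∑ v, min (Γ.dist u₀ v) (Γ.dist u₁ v)) + ds_pecc Γ u₀ u₁ * (ds_pecc Γ u₀ u₁ + 1)
        ≤ ds_pecc Γ u₀ u₁ * Fintype.card W ∧
      2 * ds_pecc Γ u₀ u₁ + 1 ≤ Fintype.card W := by
  haveI : Nonempty W := hc.nonempty
  obtain ⟨a₀, b₀, hab⟩ := ds_exists_edge hc h2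
  have hPne : ((Finset.univ : Finset (W × W)).filter (fun p => Γ.Adj p.1 p.2)).Nonempty :=
    ⟨(a₀, b₀), by simp [hab]⟩
  obtain ⟨q, hqmem, hqmin⟩ := Finset.exists_min_image _ (fun p => ds_pecc Γ p.1 p.2) hPne
  simp only [Finset.mem_filter, Finset.mem_univ, true_and] at hqmem
  set u₀ := q.1
  set u₁ := q.2
  have hmin : ∀ w₀ w₁ : W, Γ.Adj w₀ w₁ → ds_pecc Γ u₀ u₁ ≤ ds_pecc Γ w₀ w₁ := by
    intro w₀ w₁ hw
    exact hqmin (w₀, w₁) (by simp [hw])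
  have hle : ∀ v, min (Γ.dist u₀ v) (Γ.dist u₁ v) ≤ ds_pecc Γ u₀ u₁ :=
    fun v => ds_pdist_le_pecc (Γ := Γ) u₀ u₁ v
  have hne : u₀ ≠ u₁ := Γ.ne_of_adj hqmem
  have h0 : 2 ≤ (Finset.univ.filter
      (fun v => min (Γ.dist u₀ v) (Γ.dist u₁ v) = 0)).card := by
    refine Finset.one_lt_card.2 ⟨u₀, ?_, u₁, ?_, hne⟩ <;>
      simp [SimpleGraph.dist_self]
  have htop : 1 ≤ (Finset.univ.filter
      (fun v => min (Γ.dist u₀ v) (Γ.dist u₁ v) = ds_pecc Γ u₀ u₁)).card := by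
    obtain ⟨x, hx⟩ := ds_exists_pecc (Γ := Γ) u₀ u₁
    refine Finset.card_pos.2 ⟨x, ?_⟩
    simp [hx]
  have hdb := fun i h1 h2 => ds_doubling_pair hc hqmem hmin (i := i) h1 h2
  exact ⟨u₀, u₁, hqmem, hmin,
    ds_sum_pair (fun v => min (Γ.dist u₀ v) (Γ.dist u₁ v)) (ds_pecc Γ u₀ u₁) hle h0 hdb,
    ds_card_pair (fun v => min (Γ.dist u₀ v) (Γ.dist u₁ v)) (ds_pecc Γ u₀ u₁) hle h0 htop hdb⟩

end Packages

section AuxGraph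

variable {V : Type*} (G : SimpleGraph V) (S : Set V)

/-- Auxiliary graph on a dominating set: adjacent iff distance at most 3. -/
def auxH : SimpleGraph ↥S where
  Adj a b := a ≠ b ∧ G.dist ↑a ↑b ≤ 3
  symm := by
    constructor
    rintro a b ⟨h1, h2⟩
    exact ⟨h1.symm, by rwa [SimpleGraph.dist_comm] at h2⟩
  loopless := by
    constructor
    rintro a ⟨h1, _⟩
    exact h1 rfl

variable {G S}

lemma auxH_connected (hG : G.Connected)
    (hdom : ∀ v : V, ∃ s ∈ S, G.dist s v ≤ 1) (hne : S.Nonempty) :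
    (auxH G S).Connected := by
  haveI : Nonempty ↥S := hne.to_subtype
  have key : ∀ t : ℕ, ∀ a b : ↥S, G.dist ↑a ↑b ≤ t → (auxH G S).Reachable a b := by
    intro t
    induction t with
    | zero =>
      intro a b h
      have : (a : V) = b := ((hG.preconnected ↑a ↑b).dist_eq_zero_iff).1 (by omega)
      rw [show a = b from Subtype.ext this]
    | succ t ih =>
      intro a b h
      by_cases h3 : G.dist ↑a ↑b ≤ 3
      · rcases eq_or_ne a b with he | hne'
        · rw [he]
        · exact SimpleGraph.Adj.reachable ⟨hne', h3⟩
      · push_neg at h3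
        obtain ⟨p, hp⟩ := (hG.preconnected ↑a ↑b).exists_walk_length_eq_dist
        set w := p.getVert 2 with hw
        have hw1 : G.dist ↑a w ≤ 2 := by rw [hw]; exact ds_getVert_left hG p 2
        have hw2 : G.dist w ↑b ≤ p.length - 2 := by rw [hw]; exact ds_getVert_right hG p 2
        obtain ⟨s, hsS, hs1⟩ := hdom w
        have hsa : G.dist ↑a s ≤ 3 := by
          have t1 := hG.dist_triangle (u := (a : V)) (v := w) (w := s)
          have t2 : G.dist w s ≤ 1 := by rwa [SimpleGraph.dist_comm]
          omega
        have hsb : G.dist s ↑b ≤ t := by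
          have t1 := hG.dist_triangle (u := s) (v := w) (w := (b : V))
          omega
        have step1 : (auxH G S).Reachable a ⟨s, hsS⟩ := by
          rcases eq_or_ne a ⟨s, hsS⟩ with he | hne'
          · rw [he]
          · exact SimpleGraph.Adj.reachable ⟨hne', hsa⟩
        exact step1.trans (ih ⟨s, hsS⟩ b hsb)
  exact ⟨fun a b => key (G.dist ↑a ↑b) a b le_rfl⟩

lemma auxH_dist_le (hG : G.Connected) (hH : (auxH G S).Connected) (a b : ↥S) :
    G.dist ↑a ↑b ≤ 3 * (auxH G S).dist a b := by
  obtain ⟨p, hp⟩ := (hH.preconnected a b).exists_walk_length_eq_dist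
  rw [← hp]
  clear hp
  induction p with
  | nil => simp [SimpleGraph.dist_self]
  | @cons x y c h q ih =>
    have t1 := hG.dist_triangle (u := (x : V)) (v := (y : V)) (w := (c : V))
    have h3 : G.dist ↑x ↑y ≤ 3 := h.2
    rw [SimpleGraph.Walk.length_cons]
    omega

/-- The middle edge of a short geodesic. -/
lemma ds_mid_edge (hG : G.Connected) {a b : V} (h1 : 1 ≤ G.dist a b) (h3 : G.dist a b ≤ 3) :
    ∃ u₀ u₁ : V, G.Adj u₀ u₁ ∧ G.dist a u₀ ≤ 1 ∧ G.dist b u₁ ≤ 1 := by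
  obtain ⟨p, hp⟩ := (hG.preconnected a b).exists_walk_length_eq_dist
  rcases (by omega : p.length = 1 ∨ p.length = 2 ∨ p.length = 3) with h | h | h
  · refine ⟨a, b, ?_, by simp [SimpleGraph.dist_self], by simp [SimpleGraph.dist_self]⟩
    have h5 := p.adj_getVert_succ (by omega : 0 < p.length)
    simp only [SimpleGraph.Walk.getVert_zero, zero_add] at h5
    rw [show (1 : ℕ) = p.length by omega] at h5
    rwa [SimpleGraph.Walk.getVert_length] at h5
  · refine ⟨p.getVert 1, b, ?_, ?_, by simp [SimpleGraph.dist_self]⟩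
    · have h5 := p.adj_getVert_succ (by omega : 1 < p.length)
      rw [show (1 : ℕ) + 1 = p.length by omega] at h5
      rwa [SimpleGraph.Walk.getVert_length] at h5
    · exact ds_getVert_left hG p 1
  · refine ⟨p.getVert 1, p.getVert 2, ?_, ?_, ?_⟩
    · exact p.adj_getVert_succ (by omega : 1 < p.length)
    · exact ds_getVert_left hG p 1
    · rw [SimpleGraph.dist_comm]
      have := ds_getVert_right hG p 2
      omega

end AuxGraph
section Arith

lemma ds_mono1 {e m N s : ℕ} (h : s + e * e ≤ e * N) (hem : e ≤ m) (hmN : 2 * m ≤ N) :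
    s + m * m ≤ m * N := by
  zify at h hem hmN ⊢
  nlinarith [mul_nonneg (by linarith : (0:ℤ) ≤ (m:ℤ) - e)
    (by linarith : (0:ℤ) ≤ (N:ℤ) - m - e)]

lemma ds_mono2 {e y N s : ℕ} (h : s + e * (e + 1) ≤ e * N) (hey : e ≤ y) (hyN : 2 * y + 2 ≤ N) :
    s + y * (y + 1) ≤ y * N := by
  zify at h hey hyN ⊢
  nlinarith [mul_nonneg (by linarith : (0:ℤ) ≤ (y:ℤ) - e)
    (by linarith : (0:ℤ) ≤ (N:ℤ) - y - e - 1)]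

end Arith

end DSAux

/-- Upper bound on the minimum status of a connected graph with order `n` and
domination number `γ < ⌈n/3⌉`. -/
theorem stmt18 [Fintype V] (G : SimpleGraph V) (n γ : ℕ)
    (hn : Fintype.card V = n) (hG : G.Connected)
    (hγ : domNumber G = γ) (h1 : 1 ≤ γ) (h2 : γ < (n + 2) / 3) :
    (Odd γ → minStatus G ≤ ((3 * γ - 1) / 2) * (n - (3 * γ - 1) / 2)) ∧
    (Even γ → minStatus G ≤ (3 * γ / 2) * (n + 1 - 3 * γ / 2) - (n + 1) / 2) := by
  classical
  subst hn
  have hn3 : 3 * γ + 1 ≤ Fintype.card V := by omega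
  haveI : Nonempty V := hG.nonempty
  -- extract a minimum dominating set
  have hsetne : {k | ∃ S : Set V, (∀ v ∉ S, ∃ u ∈ S, G.Adj u v) ∧ S.ncard = k}.Nonempty :=
    ⟨Set.univ.ncard, Set.univ, fun v hv => absurd (Set.mem_univ v) hv, rfl⟩
  have hmem := Nat.sInf_mem hsetne
  have hmem2 : γ ∈ {k | ∃ S : Set V, (∀ v ∉ S, ∃ u ∈ S, G.Adj u v) ∧ S.ncard = k} := by
    rw [← hγ]; exact hmem
  obtain ⟨S, hdomS, hScard⟩ := hmem2
  have hdom : ∀ v : V, ∃ s ∈ S, G.dist s v ≤ 1 := by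
    intro v
    by_cases hv : v ∈ S
    · exact ⟨v, hv, by simp [SimpleGraph.dist_self]⟩
    · obtain ⟨u, hu, hadj⟩ := hdomS v hv
      exact ⟨u, hu, ds_adj_dist_le hadj⟩
  have hSne : S.Nonempty := Set.nonempty_of_ncard_ne_zero (by omega)
  haveI : Fintype ↥S := (Set.toFinite S).fintype
  have hScard' : Fintype.card ↥S = γ := by
    rw [← Nat.card_eq_fintype_card, Nat.card_coe_set_eq, hScard]
  have hHconn : (auxH G S).Connected := auxH_connected hG hdom hSne
  have hmin_le : ∀ u : V, minStatus G ≤ status G u := fun u => Nat.sInf_le ⟨u, rfl⟩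
  constructor
  · -- odd case
    rintro ⟨j, hj⟩
    have hmval : (3 * γ - 1) / 2 = 3 * j + 1 := by omega
    rw [hmval]
    obtain ⟨c, hcmin, -, hccard⟩ := ds_single_package hHconn
    rw [hScard'] at hccard
    have hHecc : ds_ecc (auxH G S) c ≤ j := by omega
    obtain ⟨u, humin, husum, -⟩ := ds_single_package hG
    have heccu : ds_ecc G u ≤ 3 * j + 1 := by
      refine le_trans (humin ↑c) (ds_ecc_le fun v => ?_)
      obtain ⟨s, hsS, hs1⟩ := hdom v
      have t1 := hG.dist_triangle (u := (c : V)) (v := s) (w := v)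
      have t2 : G.dist ↑c s ≤ 3 * (auxH G S).dist c ⟨s, hsS⟩ :=
        auxH_dist_le hG hHconn c ⟨s, hsS⟩
      have t3 : (auxH G S).dist c ⟨s, hsS⟩ ≤ ds_ecc (auxH G S) c :=
        ds_dist_le_ecc c ⟨s, hsS⟩
      omega
    have hstat : status G u = ∑ v, G.dist u v := rfl
    have hmono : status G u + (3 * j + 1) * (3 * j + 1) ≤ (3 * j + 1) * Fintype.card V := by
      refine ds_mono1 ?_ heccu (by omega)
      rw [hstat]
      exact husum
    have hexp : (3 * j + 1) * (Fintype.card V - (3 * j + 1))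
        + (3 * j + 1) * (3 * j + 1) = (3 * j + 1) * Fintype.card V := by
      rw [← Nat.mul_add]
      congr 1
      omega
    have hfin := hmin_le u
    omega
  · -- even case
    rintro ⟨k, hk⟩
    have hk1 : 1 ≤ k := by omega
    have hMval : 3 * γ / 2 = 3 * k := by omega
    rw [hMval]
    have hS2 : 2 ≤ Fintype.card ↥S := by omega
    obtain ⟨a, b, habH, -, -, hHcard⟩ := ds_pair_package hHconn hS2
    rw [hScard'] at hHcard
    have hpeH : ds_pecc (auxH G S) a b + 1 ≤ k := by omega
    have hne' : (a : V) ≠ ↑b := fun hh => habH.1 (Subtype.ext hh)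
    have hab1 : 1 ≤ G.dist ↑a ↑b := by
      rcases Nat.eq_zero_or_pos (G.dist ↑a ↑b) with hz | hp
      · exact absurd ((hG.preconnected ↑a ↑b).dist_eq_zero_iff.1 hz) hne'
      · exact hp
    obtain ⟨u₀, u₁, hadj01, hu₀a, hu₁b⟩ := ds_mid_edge hG hab1 habH.2
    have hpecc_ub : ds_pecc G u₀ u₁ ≤ 3 * k - 1 := by
      refine ds_pecc_le fun v => ?_
      obtain ⟨s, hsS, hs1⟩ := hdom v
      have hmins : min ((auxH G S).dist a ⟨s, hsS⟩) ((auxH G S).dist b ⟨s, hsS⟩)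
          ≤ ds_pecc (auxH G S) a b := ds_pdist_le_pecc (Γ := auxH G S) a b ⟨s, hsS⟩
      have ta : G.dist ↑a s ≤ 3 * (auxH G S).dist a ⟨s, hsS⟩ :=
        auxH_dist_le hG hHconn a ⟨s, hsS⟩
      have tb : G.dist ↑b s ≤ 3 * (auxH G S).dist b ⟨s, hsS⟩ :=
        auxH_dist_le hG hHconn b ⟨s, hsS⟩
      have t1 := hG.dist_triangle (u := u₀) (v := (a : V)) (w := v)
      have t2 := hG.dist_triangle (u := (a : V)) (v := s) (w := v)
      have t3 : G.dist u₀ ↑a = G.dist ↑a u₀ := SimpleGraph.dist_comm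
      have t4 := hG.dist_triangle (u := u₁) (v := (b : V)) (w := v)
      have t5 := hG.dist_triangle (u := (b : V)) (v := s) (w := v)
      have t6 : G.dist u₁ ↑b = G.dist ↑b u₁ := SimpleGraph.dist_comm
      omega
    obtain ⟨w₀, w₁, hadjw, hwmin, hwsum, -⟩ := ds_pair_package hG (by omega)
    have hpew : ds_pecc G w₀ w₁ ≤ 3 * k - 1 := le_trans (hwmin u₀ u₁ hadj01) hpecc_ub
    have hsum2 : status G w₀ + status G w₁
        ≤ 2 * (∑ v, min (G.dist w₀ v) (G.dist w₁ v)) + Fintype.card V := by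
      have hpt : ∀ v : V, G.dist w₀ v + G.dist w₁ v
          ≤ 2 * min (G.dist w₀ v) (G.dist w₁ v) + 1 := by
        intro v
        have t1 := hG.dist_triangle (u := w₀) (v := w₁) (w := v)
        have t2 := hG.dist_triangle (u := w₁) (v := w₀) (w := v)
        have t3 : G.dist w₀ w₁ ≤ 1 := ds_adj_dist_le hadjw
        have t4 : G.dist w₁ w₀ ≤ 1 := by rwa [SimpleGraph.dist_comm] at t3
        omega
      have e1 : status G w₀ + status G w₁ = ∑ v, (G.dist w₀ v + G.dist w₁ v) :=
        (Finset.sum_add_distrib).symm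
      have e2 : ∑ v, (2 * min (G.dist w₀ v) (G.dist w₁ v) + 1)
          = 2 * (∑ v, min (G.dist w₀ v) (G.dist w₁ v)) + Fintype.card V := by
        rw [Finset.sum_add_distrib, ← Finset.mul_sum, Finset.sum_const, Finset.card_univ,
          smul_eq_mul, mul_one]
      rw [e1, ← e2]
      exact Finset.sum_le_sum fun v _ => hpt v
    have hy : (∑ v, min (G.dist w₀ v) (G.dist w₁ v))
        + (3 * k - 1) * ((3 * k - 1) + 1) ≤ (3 * k - 1) * Fintype.card V :=
      ds_mono2 hwsum hpew (by omega)
    have hexp : 3 * k * (Fintype.card V + 1 - 3 * k) + (3 * k - 1) * ((3 * k - 1) + 1)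
        = (3 * k - 1) * Fintype.card V + Fintype.card V := by
      obtain ⟨y, hy3⟩ : ∃ y, 3 * k = y + 1 := ⟨3 * k - 1, by omega⟩
      have hy4 : 3 * k - 1 = y := by omega
      rw [hy4, hy3]
      rw [show Fintype.card V + 1 - (y + 1) = Fintype.card V - y by omega]
      rw [mul_comm y (y + 1), ← Nat.mul_add]
      rw [show Fintype.card V - y + y = Fintype.card V by omega]
      exact Nat.succ_mul y (Fintype.card V)
    have hf0 := hmin_le w₀
    have hf1 := hmin_le w₁
    omega
end
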